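/- arXiv:2203.15960 — 4 statements merged into one kernel-verified Lean document; each statement's English description precedes it below -/
import Mathlib

section
/- Let g : S¹ → S¹ be a continuous degree-one circle map with lift g̃ and induced lift g_k : S_k → S_k on the k-fold cover (k ≥ 1 a finite integer). If Z ⊆ S¹ is a minimal set for g, then there exists a positive integer m dividing k and pairwise disjoint sets Z'_1, …, Z'_m ⊆ S_k such that the full lift π_k⁻¹(Z) equals Z'_1 ∪ … ∪ Z'_m, each Z'_j is a minimal set for g_k, π_k(Z'_j) = Z for every j, and T_k maps each Z'_j onto Z'_{j+1} (indices mod m). -/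
open Set Filter Topology MeasureTheory Function
open scoped ENNReal Classical

noncomputable section

/-- The circle ℝ/ℤ. -/
abbrev Circle1 : Type := AddCircle (1 : ℝ)

/-- The k-fold cover ℝ/kℤ. -/
abbrev CircleK (k : ℕ) : Type := AddCircle ((k : ℝ))

/-- Projection ℝ → ℝ/ℤ. -/
def mk1 : ℝ → Circle1 := fun x => (x : Circle1)

/-- Projection ℝ → ℝ/kℤ. -/
def mkk (k : ℕ) : ℝ → CircleK k := fun x => (x : CircleK k)

/-- Covering projection S_k → S¹ induced by the identity on ℝ. -/
def piK (k : ℕ) : CircleK k → Circle1 :=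
  QuotientAddGroup.map (AddSubgroup.zmultiples ((k : ℕ) : ℝ)) (AddSubgroup.zmultiples (1 : ℝ))
    (AddMonoidHom.id ℝ)
    (by
      intro x hx
      obtain ⟨n, rfl⟩ := AddSubgroup.mem_zmultiples_iff.mp hx
      simp only [AddSubgroup.mem_comap, AddMonoidHom.id_apply]
      exact AddSubgroup.mem_zmultiples_iff.mpr
        ⟨n * (k : ℤ), by push_cast [zsmul_eq_mul]; ring⟩)

/-- Deck transformation of S_k, induced by x ↦ x + 1. -/
def TK (k : ℕ) : CircleK k → CircleK k := fun x => x + mkk k 1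

/-- Forward orbit of a point. -/
def fwdOrbit {X : Type*} (f : X → X) (x : X) : Set X := Set.range fun n : ℕ => f^[n] x

/-- A nonempty compact invariant set on which every forward orbit is dense. -/
def IsMinimalSet {X : Type*} [TopologicalSpace X] (f : X → X) (Z : Set X) : Prop :=
  Z.Nonempty ∧ IsCompact Z ∧ Set.MapsTo f Z Z ∧ ∀ z ∈ Z, Z ⊆ closure (fwdOrbit f z)

/-- x = lim f^[n i] x along some sequence n i → ∞. -/
def IsRecurrentPt {X : Type*} [TopologicalSpace X] (f : X → X) (x : X) : Prop :=
  ∃ n : ℕ → ℕ, Tendsto n atTop atTop ∧ Tendsto (fun i => f^[n i] x) atTop (𝓝 x)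

/-- The point x has rotation number ρ for the lift gt. -/
def HasPtRotNum (gt : ℝ → ℝ) (x ρ : ℝ) : Prop :=
  Tendsto (fun n : ℕ => (gt^[n] x - x) / n) atTop (𝓝 ρ)

/-- gt has rotation number ρ (the limit exists for all points and equals ρ). -/
def HasRotNum (gt : ℝ → ℝ) (ρ : ℝ) : Prop := ∀ x, HasPtRotNum gt x ρ

/-- The rotation set of a lift. -/
def rotSet (gt : ℝ → ℝ) : Set ℝ := {ρ | ∃ x, HasPtRotNum gt x ρ}

/-- Continuous nondecreasing degree-one lift. -/
def IsSemiMonotoneLift (ht : ℝ → ℝ) : Prop :=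
  Continuous ht ∧ Monotone ht ∧ ∀ x, ht (x + 1) = ht x + 1

/-- [a,b] is (a fundamental-domain representative of) a maximal nontrivial closed
arc on which the induced circle map is constant. -/
def IsFlatSpot (ht : ℝ → ℝ) (a b : ℝ) : Prop :=
  a < b ∧ b - a < 1 ∧ (∀ x ∈ Set.Icc a b, ht x = ht a) ∧
    ∀ a' b', a' ≤ a → b ≤ b' → (∀ x ∈ Set.Icc a' b', ht x = ht a) → a' = a ∧ b' = b

/-- The left shift on one-sided sequences. -/
def shiftSeq {α : Type*} : (ℕ → α) → ℕ → α := fun s n => s (n + 1)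

/-- Strict lexicographic order on one-sided sequences. -/
def lexLt {α : Type*} [LT α] (s t : ℕ → α) : Prop :=
  ∃ n, (∀ i, i < n → s i = t i) ∧ s n < t n

/-- Lexicographic order on one-sided sequences. -/
def lexLe {α : Type*} [LT α] (s t : ℕ → α) : Prop := s = t ∨ lexLt s t

/-- Reduction of every entry mod 2. -/
def pihat : (ℕ → ℕ) → ℕ → ℕ := fun s n => s n % 2

/-- The sequence s has symbolic rotation number ω: the averages of the mod-2
reductions of its entries converge to ω. -/
def symbRot (s : ℕ → ℕ) (ω : ℝ) : Prop :=
  Tendsto (fun n : ℕ => (∑ i ∈ Finset.range (n + 1), ((s i % 2 : ℕ) : ℝ)) / (n + 1))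
    atTop (𝓝 ω)

/-- Allowed transitions for Ω_k (entries mod 2k). -/
def transK (k : ℕ) (a c : ℕ) : Prop :=
  (Even a ∧ (c = a ∨ c = a + 1)) ∨ (Odd a ∧ (c = (a + 1) % (2 * k) ∨ c = (a + 2) % (2 * k)))

/-- The subshift Ω_k ⊆ Σ⁺_{2k}. -/
def OmegaK (k : ℕ) : Set (ℕ → ℕ) :=
  {s | (∀ n, s n < 2 * k) ∧ ∀ n, transK k (s n) (s (n + 1))}

/-- Allowed transitions for Ω_∞. -/
def transZ (a c : ℤ) : Prop :=
  (Even a ∧ (c = a ∨ c = a + 1)) ∨ (Odd a ∧ (c = a + 1 ∨ c = a + 2))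

/-- The subshift Ω_∞ ⊆ ℤ^ℕ. -/
def OmegaInf : Set (ℕ → ℤ) := {s | ∀ n, transZ (s n) (s (n + 1))}

/-- p̂_k : Ω_∞ → Ω_k, reduction of all entries mod 2k. -/
def projK (k : ℕ) : (ℕ → ℤ) → ℕ → ℕ := fun s n => (s n % (2 * k : ℤ)).toNat

/-- A symbolic k-fold semi-monotone subset of Ω_k. -/
def SymbolicKfsm (k : ℕ) (Z : Set (ℕ → ℕ)) : Prop :=
  Z ⊆ OmegaK k ∧ Set.MapsTo shiftSeq Z Z ∧
    ∃ Z' : Set (ℕ → ℤ), Z' ⊆ OmegaInf ∧ Set.MapsTo shiftSeq Z' Z' ∧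
      (fun s : ℕ → ℤ => fun n => s n + 2 * k) '' Z' = Z' ∧
      (∀ s ∈ Z', ∀ t ∈ Z', lexLe s t → lexLe (shiftSeq s) (shiftSeq t)) ∧
      projK k '' Z' = Z

/-- The dynamical order interval ⟨a, b⟩. -/
def dynInterval (a b : ℕ → ℕ) : Set (ℕ → ℕ) :=
  {s | ∀ n, lexLe a (shiftSeq^[n] s) ∧ lexLe (shiftSeq^[n] s) b}

/-- The unique shift-invariant probability measure on the orbit of a periodic
point of period N: the uniform average of point masses along the orbit. -/
noncomputable def orbitMeasure (s : ℕ → ℕ) (N : ℕ) : Measure (ℕ → ℕ) :=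
  (N : ℝ≥0∞)⁻¹ • ∑ i ∈ Finset.range N, Measure.dirac (shiftSeq^[i] s)

/-! ### The Hedlund–Morse construction -/

/-- Partial sums ν₁ + ⋯ + ν_j. -/
def psum {k : ℕ} (ν : Fin k → ℝ) (j : ℕ) : ℝ := ∑ i : Fin k, if (i : ℕ) < j then ν i else 0

/-- An allowable HM parameter pair. -/
def HMAllowable {k : ℕ} (ω : ℝ) (ν : Fin k → ℝ) : Prop :=
  0 < ω ∧ ω < 1 ∧ (∀ i, 0 ≤ ν i) ∧ ∑ i, ν i = k * (1 - ω)

/-- Left endpoint of the HM address interval X_m. -/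
def hmL {k : ℕ} (ω : ℝ) (ν : Fin k → ℝ) (m : ℕ) : ℝ :=
  if Even m then psum ν (m / 2) + ((m / 2 : ℕ) : ℝ) * ω
  else psum ν (m / 2 + 1) + ((m / 2 : ℕ) : ℝ) * ω

/-- Right endpoint of the HM address interval X_m. -/
def hmR {k : ℕ} (ω : ℝ) (ν : Fin k → ℝ) (m : ℕ) : ℝ :=
  if Even m then psum ν (m / 2 + 1) + ((m / 2 : ℕ) : ℝ) * ω
  else psum ν (m / 2 + 1) + ((m / 2 + 1 : ℕ) : ℝ) * ω

/-- The HM address interval X_m ⊆ ℝ (a fundamental-domain representative). -/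
def hmX {k : ℕ} (ω : ℝ) (ν : Fin k → ℝ) (m : ℕ) : Set ℝ := Set.Icc (hmL ω ν m) (hmR ω ν m)

/-- Rigid rotation by ω on S_k. -/
def RotK (k : ℕ) (ω : ℝ) : CircleK k → CircleK k := fun x => x + mkk k ω

/-- The good set: points whose forward rotation orbit avoids all endpoints of the
address intervals. -/
def hmGood (k : ℕ) (ω : ℝ) (ν : Fin k → ℝ) : Set (CircleK k) :=
  {x | ∀ n : ℕ, ∀ m, m < 2 * k →
    (RotK k ω)^[n] x ≠ mkk k (hmL ω ν m) ∧ (RotK k ω)^[n] x ≠ mkk k (hmR ω ν m)}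

/-- The address of a point of S_k (the index m with x ∈ X_m; junk value 0 if none). -/
noncomputable def hmAddr (k : ℕ) (ω : ℝ) (ν : Fin k → ℝ) (x : CircleK k) : ℕ :=
  if h : ∃ m, m < 2 * k ∧ x ∈ mkk k '' hmX ω ν m then h.choose else 0

/-- The HM itinerary of a point of S_k. -/
noncomputable def hmZeta (k : ℕ) (ω : ℝ) (ν : Fin k → ℝ) (x : CircleK k) : ℕ → ℕ :=
  fun n => hmAddr k ω ν ((RotK k ω)^[n] x)

/-- B_k(ω,ν): the closure of the set of itineraries of good points. -/
noncomputable def hmB (k : ℕ) (ω : ℝ) (ν : Fin k → ℝ) : Set (ℕ → ℕ) :=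
  closure (hmZeta k ω ν '' hmGood k ω ν)

/-- λ_k(ω,ν) = ζ_*(Leb)/k, where Leb is Lebesgue measure on S_k = [0,k). -/
noncomputable def hmLambda (k : ℕ) (ω : ℝ) (ν : Fin k → ℝ) : Measure (ℕ → ℕ) :=
  (k : ℝ≥0∞)⁻¹ •
    ((((volume.restrict (Set.Ico (0 : ℝ) (k : ℝ))).map (mkk k)).restrict
        (hmGood k ω ν)).map (hmZeta k ω ν))

/-- The left cyclic shift τ on ℝ^k. -/
def cyc {k : ℕ} (ν : Fin k → ℝ) : Fin k → ℝ :=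
  fun i => ν ⟨(i.val + 1) % k, Nat.mod_lt _ (Nat.lt_of_le_of_lt (Nat.zero_le _) i.isLt)⟩

/-- The Sturmian minimal set with rotation number ω. -/
noncomputable def sturmianSet (ω : ℝ) : Set (ℕ → ℕ) :=
  if ω = 0 then {fun _ => 0}
  else if ω = 1 then {fun _ => 1}
  else hmB 1 ω fun _ => 1 - ω

/-! ### The class 𝒢 of bimodal degree-one circle maps -/

/-- Piecewise C² on [0,1]. -/
def PiecewiseC2 (f : ℝ → ℝ) : Prop :=
  ∃ (n : ℕ) (x : ℕ → ℝ), x 0 = 0 ∧ x n = 1 ∧ (∀ i, i < n → x i ≤ x (i + 1)) ∧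
    ∀ i, i < n → ContDiffOn ℝ 2 f (Set.Ioo (x i) (x (i + 1)))

/-- g : S¹ → S¹ belongs to the class 𝒢, with lift gt and turning point xmax. -/
structure GMap (g : Circle1 → Circle1) (gt : ℝ → ℝ) (xmax : ℝ) : Prop where
  cont : Continuous gt
  pw : PiecewiseC2 gt
  deg : ∀ x, gt (x + 1) = gt x + 1
  lift : ∀ x, g (mk1 x) = mk1 (gt x)
  xmax_pos : 0 < xmax
  xmax_lt_one : xmax < 1
  expand : ∀ x ∈ Set.Ioo (0 : ℝ) xmax, ∃ d, 1 < d ∧ HasDerivAt gt d x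
  dec : ∀ x ∈ Set.Icc xmax 1, ∀ y ∈ Set.Icc xmax 1, x < y → gt y < gt x
  low : 0 ≤ gt 0
  mid : gt 0 < gt xmax
  high : gt xmax ≤ xmax + 1

/-- The address intervals I_m ⊆ ℝ: I_{2j} = [j, zmax+j], I_{2j+1} = [zmin+j, xmax+j]. -/
def addrI (zmax zmin xmax : ℝ) (m : ℤ) : Set ℝ :=
  if Even m then Set.Icc ((m / 2 : ℤ) : ℝ) (zmax + ((m / 2 : ℤ) : ℝ))
  else Set.Icc (zmin + (((m - 1) / 2 : ℤ) : ℝ)) (xmax + (((m - 1) / 2 : ℤ) : ℝ))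

/-- Λ_∞(g): points of ℝ whose forward gt-orbit stays in the address intervals. -/
def LambdaInf (gt : ℝ → ℝ) (zmax zmin xmax : ℝ) : Set ℝ :=
  {x | ∀ n : ℕ, ∃ m : ℤ, gt^[n] x ∈ addrI zmax zmin xmax m}

/-- Λ_k(g): points of S_k whose forward g_k-orbit stays in I_0 ∪ ⋯ ∪ I_{2k-1}. -/
def LambdaK (k : ℕ) (gk : CircleK k → CircleK k) (zmax zmin xmax : ℝ) : Set (CircleK k) :=
  {x | ∀ n : ℕ, ∃ m : ℕ, m < 2 * k ∧ gk^[n] x ∈ mkk k '' addrI zmax zmin xmax (m : ℤ)}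

/-- Λ₁(g): points of S¹ whose forward g-orbit stays in I₀ ∪ I₁. -/
def Lambda1 (g : Circle1 → Circle1) (zmax zmin xmax : ℝ) : Set Circle1 :=
  {x | ∀ n : ℕ, g^[n] x ∈ mk1 '' Set.Icc 0 zmax ∪ mk1 '' Set.Icc zmin xmax}

/-- A k-fold semi-monotone subset of S_k: it has a lift Z' ⊆ ℝ that is
gt-invariant, invariant under x ↦ x + k, and on which gt is weakly order
preserving. -/
def PhysKfsmK (gt : ℝ → ℝ) (k : ℕ) (Z : Set (CircleK k)) : Prop :=
  ∃ Z' : Set ℝ, (∀ x ∈ Z', gt x ∈ Z') ∧ (fun x => x + (k : ℝ)) '' Z' = Z' ∧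
    (∀ x ∈ Z', ∀ y ∈ Z', x < y → gt x ≤ gt y) ∧ mkk k '' Z' = Z

/-- A k-fold semi-monotone subset of S¹. -/
def PhysKfsm1 (gt : ℝ → ℝ) (k : ℕ) (Z : Set Circle1) : Prop :=
  ∃ Z' : Set ℝ, (∀ x ∈ Z', gt x ∈ Z') ∧ (fun x => x + (k : ℝ)) '' Z' = Z' ∧
    (∀ x ∈ Z', ∀ y ∈ Z', x < y → gt x ≤ gt y) ∧ mk1 '' Z' = Z

end

/-! ### Auxiliary lemmas for Statement 0 -/

section Aux0

/-- strongly minimal: nonempty compact closed invariant with no proper such subset. -/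
def SMin0 {X : Type*} [TopologicalSpace X] (f : X → X) (A : Set X) : Prop :=
  A.Nonempty ∧ IsClosed A ∧ IsCompact A ∧ Set.MapsTo f A A ∧
    ∀ B ⊆ A, B.Nonempty → IsClosed B → Set.MapsTo f B B → B = A

lemma exists_sMin0 {X : Type*} [TopologicalSpace X] (f : X → X) {W : Set X}
    (hne : W.Nonempty) (hcl : IsClosed W) (hcp : IsCompact W) (hinv : Set.MapsTo f W W) :
    ∃ A, A ⊆ W ∧ SMin0 f A := by
  set S : Set (Set X) := {A | A ⊆ W ∧ A.Nonempty ∧ IsClosed A ∧ Set.MapsTo f A A} with hS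
  have hz : ∀ c ⊆ S, IsChain (· ⊆ ·) c → c.Nonempty → ∃ lb ∈ S, ∀ s ∈ c, lb ⊆ s := by
    intro c hcS hchain hcne
    haveI : Nonempty c := hcne.to_subtype
    have hdir : Directed (· ⊇ ·) (fun A : c => (A : Set X)) := by
      rintro ⟨a, ha⟩ ⟨b, hb⟩
      rcases eq_or_ne a b with rfl | hab
      · exact ⟨⟨a, ha⟩, subset_rfl, subset_rfl⟩
      · rcases hchain ha hb hab with h | h
        · exact ⟨⟨a, ha⟩, subset_rfl, h⟩
        · exact ⟨⟨b, hb⟩, h, subset_rfl⟩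
    have hne' : (⋂ A : c, (A : Set X)).Nonempty := by
      apply IsCompact.nonempty_iInter_of_directed_nonempty_isCompact_isClosed _ hdir
      · exact fun A => (hcS A.2).2.1
      · exact fun A => hcp.of_isClosed_subset (hcS A.2).2.2.1 (hcS A.2).1
      · exact fun A => (hcS A.2).2.2.1
    obtain ⟨A₀, hA₀⟩ := hcne
    refine ⟨⋂₀ c, ⟨?_, ?_, ?_, ?_⟩, fun s hs => sInter_subset_of_mem hs⟩
    · exact (sInter_subset_of_mem hA₀).trans (hcS hA₀).1
    · rwa [sInter_eq_iInter]
    · exact isClosed_sInter fun A hA => (hcS hA).2.2.1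
    · intro x hx A hA
      exact (hcS hA).2.2.2 (hx A hA)
  obtain ⟨A, hAW, hAS, hAmin⟩ := zorn_superset_nonempty S hz W ⟨subset_rfl, hne, hcl, hinv⟩
  obtain ⟨hA1, hA2, hA3, hA4⟩ := hAS
  refine ⟨A, hA1, hA2, hA3, hcp.of_isClosed_subset hA3 hA1, hA4, ?_⟩
  intro B hBA hBne hBcl hBinv
  exact subset_antisymm hBA (hAmin ⟨hBA.trans hA1, hBne, hBcl, hBinv⟩ hBA)

lemma sMin0_isMinimal {X : Type*} [TopologicalSpace X] {f : X → X} (hf : Continuous f)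
    {A : Set X} (h : SMin0 f A) : ∀ z ∈ A, A ⊆ closure (fwdOrbit f z) := by
  obtain ⟨hne, hcl, hcp, hinv, hmin⟩ := h
  intro z hz
  have hsub : f '' fwdOrbit f z ⊆ fwdOrbit f z := by
    rintro _ ⟨_, ⟨n, rfl⟩, rfl⟩
    exact ⟨n + 1, Function.iterate_succ_apply' f n z⟩
  have hB : A ∩ closure (fwdOrbit f z) = A := by
    refine hmin _ inter_subset_left ⟨z, hz, subset_closure ⟨0, rfl⟩⟩
      (hcl.inter isClosed_closure) ?_
    rintro y ⟨hyA, hyc⟩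
    refine ⟨hinv hyA, ?_⟩
    exact closure_mono hsub (image_closure_subset_closure_image hf (mem_image_of_mem f hyc))
  exact hB.superset.trans inter_subset_right

lemma sMin0_eq_of_inter {X : Type*} [TopologicalSpace X] {f : X → X} {A B : Set X}
    (hA : SMin0 f A) (hB : SMin0 f B) (h : (A ∩ B).Nonempty) : A = B := by
  have hC : Set.MapsTo f (A ∩ B) (A ∩ B) := fun x hx => ⟨hA.2.2.2.1 hx.1, hB.2.2.2.1 hx.2⟩
  have e1 := hA.2.2.2.2 _ inter_subset_left h (hA.2.1.inter hB.2.1) hC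
  have e2 := hB.2.2.2.2 _ inter_subset_right h (hA.2.1.inter hB.2.1) hC
  rw [← e1]
  exact e2

lemma sMin0_image {X : Type*} [TopologicalSpace X] {f : X → X} (e : X ≃ₜ X)
    (hcomm : ∀ x, f (e x) = e (f x)) {A : Set X} (h : SMin0 f A) : SMin0 f (e '' A) := by
  obtain ⟨hne, hcl, hcp, hinv, hmin⟩ := h
  refine ⟨hne.image e, e.isClosedMap A hcl, hcp.image e.continuous, ?_, ?_⟩
  · rintro _ ⟨x, hx, rfl⟩
    rw [hcomm]
    exact mem_image_of_mem _ (hinv hx)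
  · intro B hB hBne hBcl hBinv
    have hC : e.symm '' B ⊆ A := by
      rintro _ ⟨b, hb, rfl⟩
      obtain ⟨a, ha, rfl⟩ := hB hb
      simpa using ha
    have hCinv : Set.MapsTo f (e.symm '' B) (e.symm '' B) := by
      rintro _ ⟨b, hb, rfl⟩
      refine ⟨f b, hBinv hb, ?_⟩
      have h2 := hcomm (e.symm b)
      rw [e.apply_symm_apply] at h2
      rw [h2, e.symm_apply_apply]
    have hCA := hmin _ hC (hBne.image _) (e.symm.isClosedMap B hBcl) hCinv
    rw [← hCA, Set.image_image]
    simp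

end Aux0

/-- The full lift to the k-fold cover of a minimal set of a
degree-one circle map decomposes into m minimal sets permuted cyclically by the
deck transformation, where m divides k. -/
theorem statement0 (k : ℕ) (hk : 1 ≤ k)
    (g : Circle1 → Circle1) (gt : ℝ → ℝ)
    (hcont : Continuous gt) (hdeg : ∀ x, gt (x + 1) = gt x + 1)
    (hlift : ∀ x, g (mk1 x) = mk1 (gt x))
    (gk : CircleK k → CircleK k) (hgk : ∀ x, gk (mkk k x) = mkk k (gt x))
    (Z : Set Circle1) (hZ : IsMinimalSet g Z) :
    ∃ m : ℕ, 0 < m ∧ m ∣ k ∧ ∃ Z' : ZMod m → Set (CircleK k),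
      Pairwise (Function.onFun Disjoint Z') ∧
      piK k ⁻¹' Z = ⋃ j, Z' j ∧
      (∀ j, IsMinimalSet gk (Z' j)) ∧
      (∀ j, piK k '' Z' j = Z) ∧
      (∀ j, TK k '' Z' j = Z' (j + 1)) := by
  -- Setup
  have hk0 : (0:ℝ) < k := by exact_mod_cast hk
  haveI : Fact (0 < (k:ℝ)) := ⟨hk0⟩
  have hqk : Topology.IsQuotientMap (mkk k) := QuotientAddGroup.isOpenQuotientMap_mk.isQuotientMap
  have hq1 : Topology.IsQuotientMap mk1 := QuotientAddGroup.isOpenQuotientMap_mk.isQuotientMap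
  have hmks : Function.Surjective (mkk k) := QuotientAddGroup.mk_surjective
  have hm1s : Function.Surjective mk1 := QuotientAddGroup.mk_surjective
  have hpim : ∀ a : ℝ, piK k (mkk k a) = mk1 a := fun _ => rfl
  have hmadd : ∀ a b : ℝ, mkk k (a + b) = mkk k a + mkk k b := fun _ _ => rfl
  have hgkc : Continuous gk := by
    rw [hqk.continuous_iff]
    have h : gk ∘ mkk k = mkk k ∘ gt := funext hgk
    rw [h]
    exact hqk.continuous.comp hcont
  have hpic : Continuous (piK k) := by
    rw [hqk.continuous_iff]
    have h : piK k ∘ mkk k = mk1 := funext hpim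
    rw [h]
    exact hq1.continuous
  have hpis : Function.Surjective (piK k) := by
    intro y
    obtain ⟨a, rfl⟩ := hm1s y
    exact ⟨mkk k a, hpim a⟩
  have hmk1eq : ∀ a b : ℝ, mk1 a = mk1 b ↔ ∃ j : ℤ, a = b + j := by
    intro a b
    rw [show mk1 a = (a : Circle1) from rfl, show mk1 b = (b : Circle1) from rfl,
      QuotientAddGroup.eq_iff_sub_mem, AddSubgroup.mem_zmultiples_iff]
    constructor
    · rintro ⟨j, hj⟩
      refine ⟨j, ?_⟩
      simp at hj
      linarith
    · rintro ⟨j, rfl⟩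
      exact ⟨j, by simp⟩
  have hsemi : ∀ x, piK k (gk x) = g (piK k x) := by
    intro x
    obtain ⟨a, rfl⟩ := hmks x
    rw [hgk, hpim, hpim, hlift]
  -- integer degree
  have hdec1 : ∀ x : ℝ, gt (x - 1) = gt x - 1 := by
    intro x
    have h := hdeg (x - 1)
    rw [sub_add_cancel] at h
    linarith
  have hdegZ : ∀ (j : ℤ) (x : ℝ), gt (x + j) = gt x + j := by
    intro j
    induction j using Int.induction_on with
    | zero => simp
    | succ n ih =>
      intro x
      have e : x + (((n:ℤ) + 1 : ℤ) : ℝ) = (x + ((n:ℤ) : ℝ)) + 1 := by push_cast; ring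
      rw [e, hdeg, ih]
      push_cast
      ring
    | pred n ih =>
      intro x
      have e : x + ((-(n:ℤ) - 1 : ℤ) : ℝ) = (x + ((-(n:ℤ) : ℤ) : ℝ)) - 1 := by push_cast; ring
      rw [e, hdec1, ih]
      push_cast
      ring
  -- translations
  set T : ℤ → (CircleK k ≃ₜ CircleK k) := fun j => Homeomorph.addRight (mkk k (j:ℝ)) with hTdef
  have hTapp : ∀ (j : ℤ) (x : CircleK k), T j x = x + mkk k (j:ℝ) := fun _ _ => rfl
  have hcomm : ∀ (j : ℤ) (x : CircleK k), gk (T j x) = T j (gk x) := by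
    intro j x
    obtain ⟨a, rfl⟩ := hmks x
    rw [hTapp, hTapp, ← hmadd, hgk, hgk, hdegZ, hmadd]
  have hpiT : ∀ (j : ℤ) (x : CircleK k), piK k (T j x) = piK k x := by
    intro j x
    obtain ⟨a, rfl⟩ := hmks x
    rw [hTapp, ← hmadd, hpim, hpim]
    exact (hmk1eq _ _).mpr ⟨j, rfl⟩
  -- the full lift W
  have hZcl : IsClosed Z := hZ.2.1.isClosed
  have hWcl : IsClosed (piK k ⁻¹' Z) := hZcl.preimage hpic
  have hWcp : IsCompact (piK k ⁻¹' Z) := hWcl.isCompact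
  have hWne : (piK k ⁻¹' Z).Nonempty := by
    obtain ⟨z, hz⟩ := hZ.1
    obtain ⟨x, rfl⟩ := hpis z
    exact ⟨x, hz⟩
  have hWinv : Set.MapsTo gk (piK k ⁻¹' Z) (piK k ⁻¹' Z) := by
    intro x hx
    show piK k (gk x) ∈ Z
    rw [hsemi]
    exact hZ.2.2.1 hx
  obtain ⟨Z₀, hZ₀W, hZ₀⟩ := exists_sMin0 gk hWne hWcl hWcp hWinv
  -- projection of Z₀ is Z
  have hprojsub : piK k '' Z₀ ⊆ Z := by
    rintro _ ⟨x, hx, rfl⟩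
    exact hZ₀W hx
  have hYcp : IsCompact (piK k '' Z₀) := hZ₀.2.2.1.image hpic
  have hYinv : ∀ n : ℕ, ∀ y ∈ piK k '' Z₀, g^[n] y ∈ piK k '' Z₀ := by
    intro n
    induction n with
    | zero => intro y hy; simpa using hy
    | succ n ih =>
      intro y hy
      rw [Function.iterate_succ_apply']
      obtain ⟨x, hx, hxe⟩ := ih y hy
      rw [← hxe, ← hsemi]
      exact mem_image_of_mem _ (hZ₀.2.2.2.1 hx)
  have hproj : piK k '' Z₀ = Z := by
    refine subset_antisymm hprojsub ?_
    obtain ⟨x₀, hx₀⟩ := hZ₀.1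
    have hy₀ : piK k x₀ ∈ piK k '' Z₀ := mem_image_of_mem _ hx₀
    have horb : fwdOrbit g (piK k x₀) ⊆ piK k '' Z₀ := by
      rintro _ ⟨n, rfl⟩
      exact hYinv n _ hy₀
    calc Z ⊆ closure (fwdOrbit g (piK k x₀)) := hZ.2.2.2 _ (hprojsub hy₀)
    _ ⊆ closure (piK k '' Z₀) := closure_mono horb
    _ = piK k '' Z₀ := hYcp.isClosed.closure_eq
  -- the translates
  set S : ℤ → Set (CircleK k) := fun j => T j '' Z₀ with hSdef
  have hSmin : ∀ j, SMin0 gk (S j) := fun j => sMin0_image (T j) (hcomm j) hZ₀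
  have hSid : ∀ j : ℤ, mkk k ((j:ℤ):ℝ) = 0 → S j = Z₀ := by
    intro j hj
    have h1 : ∀ x ∈ Z₀, T j x = x := fun x _ => by rw [hTapp, hj, add_zero]
    calc S j = id '' Z₀ := Set.image_congr h1
    _ = Z₀ := Set.image_id _
  have hmkk0 : mkk k (((0:ℤ)):ℝ) = 0 := by push_cast; rfl
  have hS0 : S 0 = Z₀ := hSid 0 hmkk0
  have hSadd : ∀ a b : ℤ, ∀ A : Set (CircleK k), T a '' (T b '' A) = T (a + b) '' A := by
    intro a b A
    rw [Set.image_image]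
    apply Set.image_congr'
    intro x
    rw [hTapp, hTapp, hTapp, add_assoc, ← hmadd]
    congr 1
    push_cast
    ring
  have hSadd' : ∀ a b : ℤ, S (a + b) = T a '' S b := fun a b => (hSadd a b Z₀).symm
  have hadd : ∀ a b : ℤ, S a = Z₀ → S b = Z₀ → S (a + b) = Z₀ := by
    intro a b ha hb
    rw [hSadd' a b, hb]
    exact ha
  have hneg : ∀ a : ℤ, S a = Z₀ → S (-a) = Z₀ := by
    intro a ha
    have h1 : S (-a + a) = T (-a) '' S a := hSadd' _ _
    rw [ha, neg_add_cancel, hS0] at h1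
    exact h1.symm
  let H : AddSubgroup ℤ :=
    { carrier := {j : ℤ | S j = Z₀}
      zero_mem' := hS0
      add_mem' := fun {a b} ha hb => hadd a b ha hb
      neg_mem' := fun {a} ha => hneg a ha }
  obtain ⟨c, hc⟩ := Int.subgroup_cyclic H
  set m := c.natAbs with hmdef
  have hmemH : ∀ j : ℤ, S j = Z₀ ↔ (m:ℤ) ∣ j := by
    intro j
    have h1 : S j = Z₀ ↔ j ∈ H := Iff.rfl
    rw [h1, hc, AddSubgroup.mem_closure_singleton]
    constructor
    · rintro ⟨n, rfl⟩
      exact Int.natAbs_dvd.mpr ⟨n, by rw [smul_eq_mul, mul_comm]⟩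
    · intro hd
      obtain ⟨d, rfl⟩ := Int.natAbs_dvd.mp hd
      exact ⟨d, by rw [smul_eq_mul, mul_comm]⟩
  have hSk : S (k:ℤ) = Z₀ := hSid k (by push_cast; exact AddCircle.coe_period _)
  have hdvdk : (m:ℤ) ∣ (k:ℤ) := (hmemH _).mp hSk
  have hmk : m ∣ k := Int.natCast_dvd_natCast.mp hdvdk
  have hmpos : 0 < m := Nat.pos_of_dvd_of_pos hmk hk
  haveI : NeZero m := ⟨hmpos.ne'⟩
  have hcongrS : ∀ a b : ℤ, ((a : ZMod m) = (b : ZMod m)) → S a = S b := by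
    intro a b h
    have hd : (m:ℤ) ∣ (a - b) := by
      have h0 : ((a - b : ℤ) : ZMod m) = 0 := by push_cast; rw [h]; ring_nf
      exact (ZMod.intCast_zmod_eq_zero_iff_dvd _ _).mp h0
    have h1 : S (a - b) = Z₀ := (hmemH _).mpr hd
    have h2 : S (b + (a - b)) = T b '' S (a - b) := hSadd' _ _
    rw [h1, show b + (a - b) = a by ring] at h2
    exact h2
  have hfib : ∀ x y : CircleK k, piK k x = piK k y → ∃ j : ℤ, x = T j y := by
    intro x y h
    obtain ⟨a, rfl⟩ := hmks x
    obtain ⟨b, rfl⟩ := hmks y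
    rw [hpim, hpim] at h
    obtain ⟨j, rfl⟩ := (hmk1eq a b).mp h
    refine ⟨j, ?_⟩
    rw [hTapp]
    exact hmadd b j
  have hprojS : ∀ j : ℤ, piK k '' S j = Z := by
    intro j
    calc piK k '' S j = piK k '' Z₀ := by
          rw [hSdef]
          simp only
          rw [Set.image_image]
          exact Set.image_congr' (fun x => hpiT j x)
    _ = Z := hproj
  -- conclusion
  refine ⟨m, hmpos, hmk, fun j : ZMod m => S ((j.val : ℤ)), ?_, ?_, ?_, ?_, ?_⟩
  · -- pairwise disjoint
    intro i j hij
    show Disjoint (S ((i.val : ℤ))) (S ((j.val : ℤ)))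
    by_contra hnd
    have hint := Set.not_disjoint_iff_nonempty_inter.mp hnd
    have heq : S ((i.val : ℤ)) = S ((j.val : ℤ)) := sMin0_eq_of_inter (hSmin _) (hSmin _) hint
    have h2 : S (-(j.val : ℤ) + (i.val : ℤ)) = Z₀ := by
      have ha := hSadd' (-(j.val : ℤ)) ((i.val : ℤ))
      rw [heq, ← hSadd', neg_add_cancel, hS0] at ha
      exact ha
    have h3 := (hmemH _).mp h2
    have h4 : ((-(j.val : ℤ) + (i.val : ℤ) : ℤ) : ZMod m) = 0 :=
      (ZMod.intCast_zmod_eq_zero_iff_dvd _ _).mpr h3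
    push_cast [ZMod.natCast_val, ZMod.cast_id] at h4
    exact hij (neg_add_eq_zero.mp h4).symm
  · -- union
    ext x
    simp only [Set.mem_preimage, Set.mem_iUnion]
    constructor
    · intro hx
      have hx' : piK k x ∈ piK k '' Z₀ := by rw [hproj]; exact hx
      obtain ⟨z, hz, hzx⟩ := hx'
      obtain ⟨j, rfl⟩ := hfib x z hzx.symm
      refine ⟨(j : ZMod m), ?_⟩
      have he : S ((((j : ZMod m).val : ℤ))) = S j :=
        hcongrS _ _ (by push_cast [ZMod.natCast_val, ZMod.cast_id]; rfl)
      rw [he]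
      exact ⟨z, hz, rfl⟩
    · rintro ⟨j, hx⟩
      show piK k x ∈ Z
      rw [← hprojS ((j.val : ℤ))]
      exact mem_image_of_mem _ hx
  · -- minimality
    intro j
    have h := hSmin ((j.val : ℤ))
    exact ⟨h.1, h.2.2.1, h.2.2.2.1, sMin0_isMinimal hgkc h⟩
  · -- projection
    exact fun j => hprojS _
  · -- deck transformation
    intro j
    have hTK : ∀ x : CircleK k, TK k x = T 1 x := by
      intro x
      rw [hTapp]
      norm_num [TK]
    calc TK k '' S ((j.val : ℤ)) = T 1 '' S ((j.val : ℤ)) := Set.image_congr' hTK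
    _ = S (1 + (j.val : ℤ)) := (hSadd' _ _).symm
    _ = S (((j + 1).val : ℤ)) := hcongrS _ _ (by
        push_cast [ZMod.natCast_val, ZMod.cast_id]
        ring)
end

section
/- Let g : S¹ → S¹ be a continuous degree-one circle map with lift g̃ and induced lift g_k : S_k → S_k (k ≥ 1 finite). Suppose x ∈ S¹ is a periodic point of g of rotation type (p,q), i.e. x has minimal period q and some lift x' ∈ ℝ of x satisfies g̃^q(x') = x' + p. Let m = gcd(k,p). Then the full preimage π_k⁻¹({gⁿ(x) : n ≥ 0}) ⊆ S_k is the disjoint union of exactly m distinct periodic orbits of g_k, each of minimal period kq/m, and T_k permutes these m orbits cyclically. -/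
open Set Filter Topology MeasureTheory Function
open scoped ENNReal Classical

/-! ### Auxiliary lemmas for statement1 -/

lemma aux_fwdOrbit_subset {X : Type*} {f : X → X} {u v : X} (h : v ∈ fwdOrbit f u) :
    fwdOrbit f v ⊆ fwdOrbit f u := by
  simp only [fwdOrbit, Set.mem_range] at h
  obtain ⟨n, rfl⟩ := h
  rintro z hz
  simp only [fwdOrbit, Set.mem_range] at hz ⊢
  obtain ⟨i, rfl⟩ := hz
  exact ⟨i + n, by rw [Function.iterate_add_apply]⟩

lemma aux_fwdOrbit_back {X : Type*} {f : X → X} {u v : X} {N : ℕ} (hN : 0 < N)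
    (hp : Function.IsPeriodicPt f N u) (h : v ∈ fwdOrbit f u) : u ∈ fwdOrbit f v := by
  simp only [fwdOrbit, Set.mem_range] at h ⊢
  obtain ⟨n, rfl⟩ := h
  refine ⟨N * (n + 1) - n, ?_⟩
  rw [← Function.iterate_add_apply]
  have h1 : N * (n + 1) - n + n = N * (n + 1) := by
    have : n + 1 ≤ N * (n + 1) := Nat.le_mul_of_pos_left _ hN
    omega
  rw [h1]
  exact hp.mul_const (n + 1)


/-- The full preimage in the k-fold cover of a periodic orbit of
rotation type (p,q) consists of gcd(k,p) periodic orbits of minimal period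
kq/gcd(k,p), permuted cyclically by the deck transformation. -/
theorem statement1 (k : ℕ) (hk : 1 ≤ k)
    (g : Circle1 → Circle1) (gt : ℝ → ℝ)
    (hcont : Continuous gt) (hdeg : ∀ x, gt (x + 1) = gt x + 1)
    (hlift : ∀ x, g (mk1 x) = mk1 (gt x))
    (gk : CircleK k → CircleK k) (hgk : ∀ x, gk (mkk k x) = mkk k (gt x))
    (x : Circle1) (p : ℤ) (q : ℕ) (hq : 0 < q)
    (hper : Function.minimalPeriod g x = q)
    (hrot : ∃ x' : ℝ, mk1 x' = x ∧ gt^[q] x' = x' + p) :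
    ∃ y : ZMod (Int.gcd p k) → CircleK k,
      Pairwise (Function.onFun Disjoint fun j => fwdOrbit gk (y j)) ∧
      piK k ⁻¹' fwdOrbit g x = ⋃ j, fwdOrbit gk (y j) ∧
      (∀ j, Function.minimalPeriod gk (y j) = k * q / Int.gcd p k) ∧
      (∀ j, TK k '' fwdOrbit gk (y j) = fwdOrbit gk (y (j + 1))) := by
  obtain ⟨x', hx'x, hx'q⟩ := hrot
  set m : ℕ := Int.gcd p k with hm_def
  have hmk : m ∣ k := by
    have h := Int.gcd_dvd_right (a := p) (b := (k : ℤ))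
    exact_mod_cast h
  have hm0 : 0 < m := Nat.pos_of_dvd_of_pos hmk (by omega)
  haveI : NeZero m := ⟨hm0.ne'⟩
  -- cast characterization
  have hciff : ∀ a b : ℤ, ((a : ZMod m) = (b : ZMod m)) ↔ (m : ℤ) ∣ b - a := fun a b =>
    (ZMod.intCast_eq_intCast_iff a b m).trans Int.modEq_iff_dvd
  have hvalcast : ∀ u : ZMod m, ((u.val : ℤ) : ZMod m) = u := by
    intro u
    push_cast
    exact ZMod.natCast_rightInverse u
  -- gt commutes with integer translations
  have hgt_int : ∀ (j : ℤ) (w : ℝ), gt (w + j) = gt w + j := by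
    intro j
    induction j using Int.induction_on with
    | zero => simp
    | succ i ih =>
      intro w
      have h1 : w + ((i : ℤ) + 1 : ℤ) = (w + (i : ℤ)) + 1 := by push_cast; ring
      rw [h1, hdeg, ih]
      push_cast
      ring
    | pred i ih =>
      intro w
      have h1 := hdeg (w + ((-(i : ℤ) - 1 : ℤ) : ℝ))
      have h2 : w + ((-(i : ℤ) - 1 : ℤ) : ℝ) + 1 = w + ((-(i : ℤ) : ℤ) : ℝ) := by
        push_cast; ring
      rw [h2, ih] at h1
      push_cast at h1 ⊢
      linarith
  have hgt_iter_int : ∀ (n : ℕ) (j : ℤ) (w : ℝ), gt^[n] (w + j) = gt^[n] w + j := by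
    intro n
    induction n with
    | zero => simp
    | succ n ih =>
      intro j w
      rw [Function.iterate_succ_apply', Function.iterate_succ_apply', ih, hgt_int]
  -- coe equality on CircleK
  have hmkk_eq : ∀ a b : ℝ, mkk k a = mkk k b ↔ ∃ s : ℤ, b = a + s * k := by
    intro a b
    constructor
    · intro h
      have h2 := QuotientAddGroup.eq.mp h
      obtain ⟨s, hs⟩ := AddSubgroup.mem_zmultiples_iff.mp h2
      rw [zsmul_eq_mul] at hs
      exact ⟨s, by linarith⟩
    · rintro ⟨s, rfl⟩
      exact QuotientAddGroup.eq.mpr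
        (AddSubgroup.mem_zmultiples_iff.mpr ⟨s, by rw [zsmul_eq_mul]; ring⟩)
  have hmk1_eq : ∀ a b : ℝ, mk1 a = mk1 b ↔ ∃ s : ℤ, b = a + s := by
    intro a b
    constructor
    · intro h
      have h2 := QuotientAddGroup.eq.mp h
      obtain ⟨s, hs⟩ := AddSubgroup.mem_zmultiples_iff.mp h2
      rw [zsmul_eq_mul, mul_one] at hs
      exact ⟨s, by linarith⟩
    · rintro ⟨s, rfl⟩
      exact QuotientAddGroup.eq.mpr
        (AddSubgroup.mem_zmultiples_iff.mpr ⟨s, by rw [zsmul_eq_mul, mul_one]; ring⟩)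
  -- iterates of lifts
  have hgk_iter : ∀ (n : ℕ) (w : ℝ), gk^[n] (mkk k w) = mkk k (gt^[n] w) := by
    intro n
    induction n with
    | zero => simp
    | succ n ih =>
      intro w
      rw [Function.iterate_succ_apply', Function.iterate_succ_apply', ih, hgk]
  have hg_iter : ∀ (n : ℕ) (w : ℝ), g^[n] (mk1 w) = mk1 (gt^[n] w) := by
    intro n
    induction n with
    | zero => simp
    | succ n ih =>
      intro w
      rw [Function.iterate_succ_apply', Function.iterate_succ_apply', ih, hlift]
  have hpiK : ∀ w : ℝ, piK k (mkk k w) = mk1 w := fun w => rfl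
  have hqt : ∀ t : ℕ, gt^[q * t] x' = x' + (t : ℝ) * (p : ℝ) := by
    intro t
    induction t with
    | zero => simp
    | succ t ih =>
      have h1 : q * (t + 1) = q * t + q := by ring
      rw [h1, Function.iterate_add_apply, hx'q, hgt_iter_int, ih]
      push_cast
      ring
  set Y : ℤ → CircleK k := fun a => mkk k (x' + (a : ℝ)) with hY
  -- key computation
  have hstep : ∀ (n : ℕ) (a b : ℤ), gk^[n] (Y b) = Y a →
      ∃ (t : ℕ) (s : ℤ), n = q * t ∧ a - b = (t : ℤ) * p + s * k := by
    intro n a b hn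
    simp only [hY] at hn
    rw [hgk_iter, hgt_iter_int] at hn
    obtain ⟨s, hs⟩ := (hmkk_eq _ _).mp hn
    have hpx : Function.IsPeriodicPt g n x := by
      show g^[n] x = x
      rw [← hx'x, hg_iter]
      apply (hmk1_eq _ _).mpr
      refine ⟨b - a + s * k, ?_⟩
      push_cast
      linarith
    have hqn : q ∣ n := hper ▸ hpx.minimalPeriod_dvd
    obtain ⟨t, rfl⟩ := hqn
    rw [hqt t] at hs
    refine ⟨t, s, rfl, ?_⟩
    have hsr : (a : ℝ) - b = (t : ℝ) * p + s * k := by linarith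
    exact_mod_cast hsr
  have hmemA : ∀ a b : ℤ, Y a ∈ fwdOrbit gk (Y b) ↔ (m : ℤ) ∣ a - b := by
    intro a b
    constructor
    · intro h
      simp only [fwdOrbit, Set.mem_range] at h
      obtain ⟨n, hn⟩ := h
      obtain ⟨t, s, rfl, hts⟩ := hstep n a b hn
      rw [hts]
      exact dvd_add ((Int.gcd_dvd_left _ _).mul_left _) ((Int.gcd_dvd_right _ _).mul_left _)
    · rintro ⟨c, hc⟩
      have hbez := Int.gcd_eq_gcd_ab p (k : ℤ)
      set A := Int.gcdA p (k : ℤ) with hA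
      set B := Int.gcdB p (k : ℤ) with hB
      set t0 : ℤ := A * c with ht0
      have key : p * t0 + (k : ℤ) * (B * c) = a - b := by
        rw [hc, hm_def, hbez]; ring
      obtain ⟨na, hna⟩ : ∃ na : ℤ, na = (t0.natAbs : ℤ) := ⟨_, rfl⟩
      set t : ℤ := t0 + na * k with ht_def
      have ht : 0 ≤ t := by
        have hk1 : (1 : ℤ) ≤ (k : ℤ) := by exact_mod_cast hk
        have hn0 : (0 : ℤ) ≤ na := by
          rw [hna]; exact Int.natCast_nonneg _
        have habs : -na ≤ t0 := by
          rcases Int.natAbs_eq t0 with h | h <;> omega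
        nlinarith
      simp only [fwdOrbit, Set.mem_range]
      refine ⟨q * t.toNat, ?_⟩
      simp only [hY]
      rw [hgk_iter, hgt_iter_int, hqt]
      apply (hmkk_eq _ _).mpr
      refine ⟨B * c - na * p, ?_⟩
      have htoNat : ((t.toNat : ℕ) : ℤ) = t := Int.toNat_of_nonneg ht
      have h1 : ((t.toNat : ℕ) : ℝ) = ((t : ℤ) : ℝ) := by
        have h2 := congrArg (fun z : ℤ => (z : ℝ)) htoNat
        simp only [Int.cast_natCast] at h2
        exact h2
      have htR : ((t.toNat : ℕ) : ℝ) = (t0 : ℝ) + (na : ℝ) * k := by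
        rw [h1, ht_def]; push_cast; ring
      have keyR : (p : ℝ) * t0 + (k : ℝ) * ((B : ℝ) * c) = (a : ℝ) - b := by
        exact_mod_cast key
      rw [htR]
      push_cast
      linear_combination -keyR
  have hqk0 : 0 < q * k := Nat.mul_pos hq (by omega)
  have hYper : ∀ b : ℤ, Function.IsPeriodicPt gk (q * k) (Y b) := by
    intro b
    show gk^[q * k] (Y b) = Y b
    simp only [hY]
    rw [hgk_iter, hgt_iter_int, hqt]
    apply (hmkk_eq _ _).mpr
    exact ⟨-p, by push_cast; ring⟩
  have horb_eq : ∀ a b : ℤ, (m : ℤ) ∣ a - b → fwdOrbit gk (Y a) = fwdOrbit gk (Y b) := by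
    intro a b hd
    apply Set.Subset.antisymm
    · exact aux_fwdOrbit_subset ((hmemA a b).mpr hd)
    · refine aux_fwdOrbit_subset ((hmemA b a).mpr ?_)
      have := hd.neg_right
      rwa [neg_sub] at this
  refine ⟨fun j => Y ((j.val : ℤ)), ?_, ?_, ?_, ?_⟩
  · -- pairwise disjoint
    intro j1 j2 hne
    refine Set.disjoint_left.mpr fun {z} hz1 hz2 => hne ?_
    have hb1 : Y ((j1.val : ℤ)) ∈ fwdOrbit gk (Y ((j2.val : ℤ))) :=
      aux_fwdOrbit_subset hz2 (aux_fwdOrbit_back hqk0 (hYper _) hz1)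
    have hd := (hmemA _ _).mp hb1
    have he : ((j2.val : ℤ) : ZMod m) = ((j1.val : ℤ) : ZMod m) := (hciff _ _).mpr hd
    rw [hvalcast, hvalcast] at he
    exact he.symm
  · -- preimage equality
    ext z
    simp only [Set.mem_preimage, Set.mem_iUnion]
    constructor
    · intro hz
      obtain ⟨w, rfl⟩ := QuotientAddGroup.mk_surjective z
      rw [show (QuotientAddGroup.mk w : CircleK k) = mkk k w from rfl, hpiK] at hz
      simp only [fwdOrbit, Set.mem_range] at hz
      obtain ⟨n, hn⟩ := hz
      rw [← hx'x, hg_iter] at hn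
      obtain ⟨s, hs⟩ := (hmk1_eq _ _).mp hn
      have hdvd : (m : ℤ) ∣ s - (((s : ZMod m).val : ℤ)) := by
        refine (hciff _ _).mp ?_
        rw [hvalcast]
      have hYs : Y s ∈ fwdOrbit gk (Y (((s : ZMod m).val : ℤ))) := (hmemA _ _).mpr hdvd
      simp only [fwdOrbit, Set.mem_range] at hYs
      obtain ⟨n', hn'⟩ := hYs
      refine ⟨(s : ZMod m), ?_⟩
      simp only [fwdOrbit, Set.mem_range]
      refine ⟨n + n', ?_⟩
      rw [Function.iterate_add_apply, hn']
      simp only [hY]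
      rw [hgk_iter, hgt_iter_int]
      rw [show (QuotientAddGroup.mk w : CircleK k) = mkk k w from rfl, hs]
    · rintro ⟨j, hj⟩
      simp only [fwdOrbit, Set.mem_range] at hj
      obtain ⟨n, rfl⟩ := hj
      simp only [fwdOrbit, Set.mem_range]
      refine ⟨n, ?_⟩
      simp only [hY]
      rw [hgk_iter, hpiK, ← hx'x, hg_iter, hgt_iter_int]
      exact (hmk1_eq _ _).mpr ⟨(j.val : ℤ), rfl⟩
  · -- minimal periods
    intro j
    obtain ⟨K', hK'⟩ := hmk
    have hN : k * q / m = q * K' := by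
      rw [hK', mul_assoc, Nat.mul_div_cancel_left _ hm0, mul_comm]
    obtain ⟨p', hp'⟩ : (m : ℤ) ∣ p := Int.gcd_dvd_left _ _
    have hper1 : Function.IsPeriodicPt gk (q * K') (Y ((j.val : ℤ))) := by
      show gk^[q * K'] (Y _) = Y _
      simp only [hY]
      rw [hgk_iter, hgt_iter_int, hqt]
      apply (hmkk_eq _ _).mpr
      refine ⟨-p', ?_⟩
      have hkp : (K' : ℝ) * (p : ℝ) = (p' : ℝ) * (k : ℝ) := by
        have h : (K' : ℤ) * p = p' * (k : ℤ) := by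
          rw [hp']
          have : (k : ℤ) = (m : ℤ) * (K' : ℤ) := by exact_mod_cast hK'
          rw [this]; ring
        exact_mod_cast h
      push_cast
      linarith
    have hdvd : ∀ n : ℕ, gk^[n] (Y ((j.val : ℤ))) = Y ((j.val : ℤ)) → (q * K') ∣ n := by
      intro n hn
      obtain ⟨t, s, rfl, hts⟩ := hstep n _ _ hn
      have hkdvd : ((k : ℤ)) ∣ (t : ℤ) * p := ⟨-s, by linear_combination -hts⟩
      have h5 : (K' : ℤ) ∣ (t : ℤ) * p' := by
        have hmm : (m : ℤ) * (K' : ℤ) ∣ (m : ℤ) * ((t : ℤ) * p') := by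
          have e1 : (m : ℤ) * (K' : ℤ) = (k : ℤ) := by exact_mod_cast hK'.symm
          have e2 : (m : ℤ) * ((t : ℤ) * p') = (t : ℤ) * p := by rw [hp']; ring
          rw [e1, e2]
          exact hkdvd
        exact (mul_dvd_mul_iff_left (by exact_mod_cast hm0.ne' : (m : ℤ) ≠ 0)).mp hmm
      have hcop : Int.gcd (K' : ℤ) p' = 1 := by
        have h0 : 0 < Int.gcd p (k : ℤ) := hm0
        have hg := Int.gcd_div_gcd_div_gcd (i := p) (j := (k : ℤ)) h0
        have e1 : p / ((Int.gcd p (k : ℤ) : ℤ)) = p' := by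
          rw [← hm_def, hp']
          exact Int.mul_ediv_cancel_left _ (by exact_mod_cast hm0.ne')
        have e2 : (k : ℤ) / ((Int.gcd p (k : ℤ) : ℤ)) = (K' : ℤ) := by
          rw [← hm_def]
          have : (k : ℤ) = (m : ℤ) * (K' : ℤ) := by exact_mod_cast hK'
          rw [this]
          exact Int.mul_ediv_cancel_left _ (by exact_mod_cast hm0.ne')
        rw [e1, e2] at hg
        rw [Int.gcd_comm]
        exact hg
      have h6 : (K' : ℤ) ∣ (t : ℤ) := Int.dvd_of_dvd_mul_left_of_gcd_one h5 hcop
      have h7 : K' ∣ t := by exact_mod_cast h6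
      exact mul_dvd_mul_left q h7
    have h8 : Function.minimalPeriod gk (Y ((j.val : ℤ))) ∣ q * K' := hper1.minimalPeriod_dvd
    have h9 : q * K' ∣ Function.minimalPeriod gk (Y ((j.val : ℤ))) :=
      hdvd _ (Function.isPeriodicPt_minimalPeriod gk (Y ((j.val : ℤ))))
    rw [hN]
    exact Nat.dvd_antisymm h8 h9
  · -- deck transformation permutes orbits
    intro j
    have hTK1 : ∀ u : CircleK k, TK k (gk u) = gk (TK k u) := by
      intro u
      obtain ⟨w, rfl⟩ := QuotientAddGroup.mk_surjective u
      show gk (mkk k w) + mkk k 1 = gk ((mkk k w) + mkk k 1)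
      have hadd : ∀ a b : ℝ, mkk k a + mkk k b = mkk k (a + b) := fun a b => rfl
      rw [hgk, hadd, hadd, hgk, hdeg]
    have hTKcomm : ∀ (n : ℕ) (u : CircleK k), TK k (gk^[n] u) = gk^[n] (TK k u) := by
      intro n
      induction n with
      | zero => intro u; rfl
      | succ n ih =>
        intro u
        rw [Function.iterate_succ_apply', Function.iterate_succ_apply', hTK1, ih]
    have himg : ∀ u, TK k '' fwdOrbit gk u = fwdOrbit gk (TK k u) := by
      intro u
      ext z
      simp only [fwdOrbit, Set.mem_image, Set.mem_range]
      constructor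
      · rintro ⟨w, ⟨n, rfl⟩, rfl⟩
        exact ⟨n, (hTKcomm n u).symm⟩
      · rintro ⟨n, rfl⟩
        exact ⟨gk^[n] u, ⟨n, rfl⟩, hTKcomm n u⟩
    have hTKY : TK k (Y ((j.val : ℤ))) = Y ((j.val : ℤ) + 1) := by
      show Y _ + mkk k 1 = Y _
      simp only [hY]
      have hadd : ∀ a b : ℝ, mkk k a + mkk k b = mkk k (a + b) := fun a b => rfl
      rw [hadd]
      congr 1
      push_cast
      ring
    rw [himg, hTKY]
    apply horb_eq
    refine (hciff _ _).mp ?_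
    rw [hvalcast]
    push_cast
    rw [ZMod.natCast_rightInverse j]
end

section
/- Let h̃ be a semi-monotone degree-one lift descending to h : S¹ → S¹, suppose h has exactly ℓ flat spots J₁,…,J_ℓ, and on P(h) = S¹ minus the interiors of the flat spots h is C¹ with one-sided derivatives > 1. If the rotation number ρ(h̃) = p/q with gcd(p,q) = 1, then the number of distinct periodic orbits of h that are wholly contained in P(h) is at least one and at most ℓ. -/
open Set Filter Topology MeasureTheory Function
open scoped ENNReal Classical

noncomputable section

/-- The positive-slope region P(h) in ℝ: the complement of the interiors of all
the (translated) flat spots. -/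
def flatComplR {l : ℕ} (a b : Fin l → ℝ) : Set ℝ :=
  {x | ∀ (i : Fin l) (n : ℤ), x ∉ Set.Ioo (a i + n) (b i + n)}

/-- The positive-slope region P(h) in the circle: the complement of the interiors
of the flat spots. -/
def flatComplC {l : ℕ} (a b : Fin l → ℝ) : Set Circle1 :=
  (⋃ i, mk1 '' Set.Ioo (a i) (b i))ᶜ

end

section AuxStatement4

open Set Filter Topology Function

variable {ht : ℝ → ℝ}

private lemma T_add_int (hdeg : ∀ x, ht (x + 1) = ht x + 1) (m : ℤ) (x : ℝ) :
    ht (x + m) = ht x + m := by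
  induction m using Int.induction_on with
  | zero => simp
  | succ n ih =>
      have h1 := hdeg (x + ((n : ℤ) : ℝ))
      have h2 : x + (((n : ℤ) + 1 : ℤ) : ℝ) = (x + ((n : ℤ) : ℝ)) + 1 := by push_cast; ring
      rw [h2, h1, ih]; push_cast; ring
  | pred n ih =>
      have h1 := hdeg (x + (-(n : ℤ) - 1 : ℤ))
      have h2 : (x + (-(n : ℤ) - 1 : ℤ)) + 1 = x + (-(n : ℤ) : ℤ) := by push_cast; ring
      rw [h2, ih] at h1
      have h3 : ht (x + (-(n : ℤ) - 1 : ℤ)) = ht x + (-(n : ℤ) : ℤ) - 1 := by linarith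
      rw [h3]; push_cast; ring

private lemma Tn_add_int (hdeg : ∀ x, ht (x + 1) = ht x + 1) (n : ℕ) (m : ℤ) (x : ℝ) :
    ht^[n] (x + m) = ht^[n] x + m := by
  induction n generalizing x with
  | zero => simp
  | succ n ih =>
      rw [Function.iterate_succ_apply, Function.iterate_succ_apply, T_add_int hdeg, ih]

private lemma Tn_add_one (hdeg : ∀ x, ht (x + 1) = ht x + 1) (n : ℕ) (x : ℝ) :
    ht^[n] (x + 1) = ht^[n] x + 1 := by
  simpa using Tn_add_int hdeg n 1 x

/-- iterate formula for G = ht^[q] - p -/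
private lemma G_iter (hdeg : ∀ x, ht (x + 1) = ht x + 1) (q : ℕ) (p : ℤ) (n : ℕ) (x : ℝ) :
    (fun y => ht^[q] y - (p : ℝ))^[n] x = ht^[q * n] x - (n : ℝ) * p := by
  induction n with
  | zero => simp
  | succ n ih =>
      rw [Function.iterate_succ_apply', ih]
      have h1 : ht^[q * n] x - (n : ℝ) * p = ht^[q * n] x + ((-(n * p) : ℤ) : ℝ) := by
        push_cast; ring
      rw [h1, Tn_add_int hdeg q _ _]
      have h2 : ht^[q] (ht^[q * n] x) = ht^[q * (n + 1)] x := by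
        have : q * (n + 1) = q + q * n := by ring
        rw [this, Function.iterate_add_apply]
      rw [h2]; push_cast; ring

private lemma fix_of_iter_fix {G : ℝ → ℝ} (hmono : Monotone G) {n : ℕ} (hn : 0 < n) {x : ℝ}
    (hx : G^[n] x = x) : G x = x := by
  rcases lt_trichotomy (G x) x with h | h | h
  · have dec : ∀ k : ℕ, G^[k + 1] x ≤ G^[k] x := by
      intro k
      induction k with
      | zero => simpa using h.le
      | succ k ih =>
          have h2 := hmono ih
          rwa [← Function.iterate_succ_apply' G (k+1) x, ← Function.iterate_succ_apply' G k x] at h2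
    have anti : Antitone fun k : ℕ => G^[k] x := antitone_nat_of_succ_le dec
    have h1 : G^[n] x ≤ G^[1] x := anti hn
    simp only [Function.iterate_one, hx] at h1
    linarith
  · exact h
  · have inc : ∀ k : ℕ, G^[k] x ≤ G^[k + 1] x := by
      intro k
      induction k with
      | zero => simpa using h.le
      | succ k ih =>
          have h2 := hmono ih
          rwa [← Function.iterate_succ_apply' G (k+1) x, ← Function.iterate_succ_apply' G k x] at h2
    have mono : Monotone fun k : ℕ => G^[k] x := monotone_nat_of_le_succ inc
    have h1 : G^[1] x ≤ G^[n] x := mono hn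
    simp only [Function.iterate_one, hx] at h1
    linarith

private lemma rot0G (hdeg : ∀ x, ht (x + 1) = ht x + 1) {p : ℤ} {q : ℕ} (hq : 1 ≤ q)
    (hrot : HasRotNum ht ((p : ℝ) / q)) (x : ℝ) :
    Tendsto (fun n : ℕ => ((fun y => ht^[q] y - (p : ℝ))^[n] x - x) / n) atTop (𝓝 0) := by
  have hq0 : (q : ℝ) ≠ 0 := by positivity
  have hqn : Tendsto (fun n : ℕ => q * n) atTop atTop := by
    apply StrictMono.tendsto_atTop
    intro c d hcd
    exact mul_lt_mul_of_pos_left hcd (by omega)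
  have h1 : Tendsto (fun n : ℕ => (ht^[q * n] x - x) / ((q * n : ℕ) : ℝ)) atTop
      (𝓝 ((p : ℝ) / q)) := (hrot x).comp hqn
  have h2 := (h1.const_mul (q : ℝ)).sub_const (p : ℝ)
  have h3 : (q : ℝ) * ((p : ℝ) / q) - p = 0 := by field_simp; ring
  rw [h3] at h2
  apply h2.congr'
  filter_upwards [eventually_ge_atTop 1] with n hn
  have hn0 : (n : ℝ) ≠ 0 := by positivity
  rw [G_iter hdeg q p n x]
  push_cast
  field_simp
  ring

private lemma exists_fixed_of_rot0 {G : ℝ → ℝ} (hc : Continuous G) (hm : Monotone G)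
    (hdeg : ∀ x, G (x + 1) = G x + 1)
    (h0 : ∀ x, Tendsto (fun n : ℕ => (G^[n] x - x) / n) atTop (𝓝 0)) : ∃ x, G x = x := by
  by_contra hno
  push_neg at hno
  set F : ℝ → ℝ := fun y => G y - y with hF
  have hFc : Continuous F := hc.sub continuous_id
  have hFne : ∀ y, F y ≠ 0 := fun y hy => hno y (by simpa [hF, sub_eq_zero] using hy)
  have hFper : ∀ y : ℝ, ∀ m : ℤ, F (y + m) = F y := by
    intro y m
    have := T_add_int (ht := G) hdeg m y
    simp only [hF]
    rw [this]; ring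
  have hsign : (∀ y, 0 < F y) ∨ (∀ y, F y < 0) := by
    rcases lt_or_gt_of_ne (hFne 0) with h | h
    · right
      intro y
      by_contra hy
      push_neg at hy
      have hy' : 0 < F y := lt_of_le_of_ne hy (Ne.symm (hFne y))
      have hmem : (0 : ℝ) ∈ F '' uIcc 0 y :=
        intermediate_value_uIcc hFc.continuousOn
          (by rw [Set.mem_uIcc]; left; exact ⟨h.le, hy'.le⟩)
      obtain ⟨z, _, hz⟩ := hmem
      exact hFne z hz
    · left
      intro y
      by_contra hy
      push_neg at hy
      have hy' : F y < 0 := lt_of_le_of_ne hy (hFne y)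
      have hmem : (0 : ℝ) ∈ F '' uIcc 0 y :=
        intermediate_value_uIcc hFc.continuousOn
          (by rw [Set.mem_uIcc]; right; exact ⟨hy'.le, h.le⟩)
      obtain ⟨z, _, hz⟩ := hmem
      exact hFne z hz
  -- reduce to a uniform bound via the minimum/maximum on [0,1]
  rcases hsign with hpos | hneg
  · obtain ⟨y₀, hy₀, hmin⟩ := (isCompact_Icc : IsCompact (Icc (0:ℝ) 1)).exists_isMinOn (f := F)
      ⟨0, by norm_num⟩ hFc.continuousOn
    set d : ℝ := F y₀ with hd
    have hd0 : 0 < d := hpos y₀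
    have hlow : ∀ y : ℝ, d ≤ F y := by
      intro y
      have hfr : Int.fract y ∈ Icc (0 : ℝ) 1 :=
        ⟨Int.fract_nonneg y, (Int.fract_lt_one y).le⟩
      have h1 : F (Int.fract y) = F y := by
        have h2 := hFper (Int.fract y) ⌊y⌋
        rw [show Int.fract y + ((⌊y⌋ : ℤ) : ℝ) = y from by rw [Int.fract]; ring] at h2
        exact h2.symm
      calc d ≤ F (Int.fract y) := hmin hfr
        _ = F y := h1
    have hgrow : ∀ n : ℕ, (n : ℝ) * d ≤ G^[n] 0 - 0 := by
      intro n
      induction n with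
      | zero => simp
      | succ n ih =>
          rw [Function.iterate_succ_apply']
          have h1 : d ≤ F (G^[n] 0) := hlow _
          simp only [hF] at h1
          push_cast
          nlinarith
    have hge : ∀ᶠ n : ℕ in atTop, d ≤ (G^[n] 0 - 0) / n := by
      filter_upwards [eventually_ge_atTop 1] with n hn
      have hn0 : (0 : ℝ) < n := by positivity
      rw [le_div_iff₀ hn0]
      calc d * n = (n : ℝ) * d := by ring
        _ ≤ G^[n] 0 - 0 := hgrow n
    have := ge_of_tendsto (h0 0) hge
    linarith
  · obtain ⟨y₀, hy₀, hmax⟩ := (isCompact_Icc : IsCompact (Icc (0:ℝ) 1)).exists_isMaxOn (f := F)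
      ⟨0, by norm_num⟩ hFc.continuousOn
    set d : ℝ := F y₀ with hd
    have hd0 : d < 0 := hneg y₀
    have hhigh : ∀ y : ℝ, F y ≤ d := by
      intro y
      have hfr : Int.fract y ∈ Icc (0 : ℝ) 1 :=
        ⟨Int.fract_nonneg y, (Int.fract_lt_one y).le⟩
      have h1 : F (Int.fract y) = F y := by
        have h2 := hFper (Int.fract y) ⌊y⌋
        rw [show Int.fract y + ((⌊y⌋ : ℤ) : ℝ) = y from by rw [Int.fract]; ring] at h2
        exact h2.symm
      calc F y = F (Int.fract y) := h1.symm
        _ ≤ d := hmax hfr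
    have hgrow : ∀ n : ℕ, G^[n] 0 - 0 ≤ (n : ℝ) * d := by
      intro n
      induction n with
      | zero => simp
      | succ n ih =>
          rw [Function.iterate_succ_apply']
          have h1 : F (G^[n] 0) ≤ d := hhigh _
          simp only [hF] at h1
          push_cast
          nlinarith
    have hge : ∀ᶠ n : ℕ in atTop, (G^[n] 0 - 0) / n ≤ d := by
      filter_upwards [eventually_ge_atTop 1] with n hn
      have hn0 : (0 : ℝ) < n := by positivity
      rw [div_le_iff₀ hn0]
      calc G^[n] 0 - 0 ≤ (n : ℝ) * d := hgrow n
        _ = d * n := by ring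
    have := le_of_tendsto (h0 0) hge
    linarith

/-- A good point: lift of a periodic point whose orbit stays in the positive-slope region. -/
private def goodFix (ht : ℝ → ℝ) (q : ℕ) (p : ℤ) {l : ℕ} (a b : Fin l → ℝ) (x : ℝ) : Prop :=
  ht^[q] x = x + p ∧ ∀ j : ℕ, ht^[j] x ∈ flatComplR a b

variable {l : ℕ} {a b : Fin l → ℝ}

private lemma flatComplR_add_int {x : ℝ} (hx : x ∈ flatComplR a b) (m : ℤ) :
    x + (m : ℝ) ∈ flatComplR a b := by
  intro i n hmem
  refine hx i (n - m) ⟨?_, ?_⟩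
  · have := hmem.1; push_cast; linarith
  · have := hmem.2; push_cast; linarith

private lemma goodFix_add_int (hdeg : ∀ x, ht (x + 1) = ht x + 1) {q : ℕ} {p : ℤ} {x : ℝ}
    (hx : goodFix ht q p a b x) (m : ℤ) : goodFix ht q p a b (x + (m : ℝ)) := by
  constructor
  · rw [Tn_add_int hdeg, hx.1]; ring
  · intro j
    rw [Tn_add_int hdeg]
    exact flatComplR_add_int (hx.2 j) m

private lemma mk1_eq_mk1_iff {u v : ℝ} : mk1 u = mk1 v ↔ ∃ m : ℤ, u = v + m := by
  constructor
  · intro hmk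
    have h1 : (u : Circle1) = (v : Circle1) := hmk
    rw [QuotientAddGroup.eq_iff_sub_mem] at h1
    obtain ⟨k, hk⟩ := AddSubgroup.mem_zmultiples_iff.mp h1
    refine ⟨k, ?_⟩
    simp [zsmul_eq_mul] at hk
    linarith
  · rintro ⟨m, rfl⟩
    show ((v + m : ℝ) : Circle1) = (v : Circle1)
    rw [QuotientAddGroup.eq_iff_sub_mem]
    exact AddSubgroup.mem_zmultiples_iff.mpr ⟨m, by simp [zsmul_eq_mul]⟩

private lemma h_iter_mk1 {h : Circle1 → Circle1} (hlift : ∀ x, h (mk1 x) = mk1 (ht x))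
    (n : ℕ) (x : ℝ) : h^[n] (mk1 x) = mk1 (ht^[n] x) := by
  induction n generalizing x with
  | zero => simp
  | succ n ih =>
      rw [Function.iterate_succ_apply, hlift, ih, Function.iterate_succ_apply]

private lemma mem_flatComplC_of {w : ℝ} (hw : w ∈ flatComplR a b) :
    mk1 w ∈ flatComplC a b := by
  rw [flatComplC, Set.mem_compl_iff]
  intro hmem2
  rw [Set.mem_iUnion] at hmem2
  obtain ⟨i, hmem2⟩ := hmem2
  rw [Set.mem_image] at hmem2
  obtain ⟨u, hu, huw⟩ := hmem2
  obtain ⟨m, hm⟩ := mk1_eq_mk1_iff.mp huw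
  exact hw i (-m) ⟨by push_cast; linarith [hu.1], by push_cast; linarith [hu.2]⟩

private lemma mem_flatComplR_of {w : ℝ} (hw : mk1 w ∈ flatComplC a b) :
    w ∈ flatComplR a b := by
  intro i n hmem
  apply hw
  rw [Set.mem_iUnion]
  refine ⟨i, ?_⟩
  rw [Set.mem_image]
  refine ⟨w - n, ⟨by linarith [hmem.1], by linarith [hmem.2]⟩, ?_⟩
  exact mk1_eq_mk1_iff.mpr ⟨-n, by push_cast; ring⟩

private lemma expand_one (hTc : Continuous ht) {D : ℝ → ℝ}
    (hD : ∀ x ∈ flatComplR a b, 1 < D x ∧ HasDerivWithinAt ht (D x) (flatComplR a b) x)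
    {u v : ℝ} (huv : u < v) (hsub : Icc u v ⊆ flatComplR a b) : v - u < ht v - ht u := by
  have hg : StrictMonoOn (fun y => ht y - y) (Icc u v) := by
    apply strictMonoOn_of_deriv_pos (f := fun y => ht y - y) (convex_Icc u v)
      (Continuous.continuousOn (by continuity))
    intro x hx
    rw [interior_Icc] at hx
    have hx' := hD x (hsub (Ioo_subset_Icc_self hx))
    have hd : HasDerivAt ht (D x) x :=
      (hx'.2.mono hsub).hasDerivAt (Icc_mem_nhds hx.1 hx.2)
    have hgd : HasDerivAt (fun y => ht y - y) (D x - 1) x := hd.sub (hasDerivAt_id x)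
    rw [hgd.deriv]
    linarith [hx'.1]
  have h2 := hg (left_mem_Icc.2 huv.le) (right_mem_Icc.2 huv.le) huv
  have h3 : ht u - u < ht v - v := h2
  linarith

private lemma expand_iter (hTc : Continuous ht) (hTm : Monotone ht) {D : ℝ → ℝ}
    (hD : ∀ x ∈ flatComplR a b, 1 < D x ∧ HasDerivWithinAt ht (D x) (flatComplR a b) x)
    {q : ℕ} {u v : ℝ} (huv : u < v)
    (hE : ∀ z ∈ Icc u v, ∀ j, j < q → ht^[j] z ∈ flatComplR a b) :
    ∀ j, 1 ≤ j → j ≤ q → v - u < ht^[j] v - ht^[j] u := by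
  intro j
  induction j with
  | zero => omega
  | succ j ih =>
      intro _ hle
      rcases Nat.eq_zero_or_pos j with rfl | hj
      · have hsub : Icc u v ⊆ flatComplR a b := by
          intro z hz
          simpa using hE z hz 0 (by omega)
        simpa using expand_one hTc hD huv hsub
      · have IH := ih hj (by omega)
        have h1 : ht^[j] u < ht^[j] v := by linarith
        have hsub : Icc (ht^[j] u) (ht^[j] v) ⊆ flatComplR a b := by
          intro w hw
          obtain ⟨z, hz, hzw⟩ := intermediate_value_Icc huv.le
            ((hTc.iterate j).continuousOn) hw
          rw [← hzw]
          exact hE z hz j (by omega)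
        have := expand_one hTc hD h1 hsub
        rw [Function.iterate_succ_apply', Function.iterate_succ_apply']
        linarith

private lemma exists_entry (hTc : Continuous ht) (hTm : Monotone ht) {D : ℝ → ℝ}
    (hD : ∀ x ∈ flatComplR a b, 1 < D x ∧ HasDerivWithinAt ht (D x) (flatComplR a b) x)
    {p : ℤ} {q : ℕ} (hq : 1 ≤ q) {u v : ℝ}
    (hu : ht^[q] u = u + p) (hv : ht^[q] v = v + p) (huv : u < v) :
    ∃ z ∈ Icc u v, ∃ j < q, ∃ (i : Fin l) (n : ℤ),
      ht^[j] z ∈ Ioo (a i + (n : ℝ)) (b i + (n : ℝ)) := by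
  by_contra hcon
  push_neg at hcon
  have hE : ∀ z ∈ Icc u v, ∀ j, j < q → ht^[j] z ∈ flatComplR a b := by
    intro z hz j hj i n hmem
    exact (hcon z hz j hj i n) hmem
  have := expand_iter hTc hTm hD huv hE q hq (le_refl q)
  rw [hu, hv] at this
  linarith

private lemma card_bound (hTc : Continuous ht) (hTm : Monotone ht)
    (hdeg : ∀ x, ht (x + 1) = ht x + 1) (hab : ∀ i, a i < b i) {D : ℝ → ℝ}
    (hD : ∀ x ∈ flatComplR a b, 1 < D x ∧ HasDerivWithinAt ht (D x) (flatComplR a b) x)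
    {p : ℤ} {q : ℕ} (hq : 1 ≤ q) {x₀ : ℝ} (hx₀ : goodFix ht q p a b x₀) (F : Finset ℝ)
    (hF : ∀ x ∈ F, goodFix ht q p a b x ∧ x ∈ Ico x₀ (x₀ + 1)) : F.card ≤ q * l := by
  classical
  set F' : Finset ℝ := insert x₀ F with hF'def
  have hmem : ∀ x ∈ F', goodFix ht q p a b x ∧ x ∈ Ico x₀ (x₀ + 1) := by
    intro x hx
    rcases Finset.mem_insert.mp hx with rfl | hx
    · exact ⟨hx₀, le_refl x, by linarith⟩
    · exact hF x hx
  set nxt : ℝ → ℝ := fun x =>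
    if hne : (F'.filter (fun y => x < y)).Nonempty then (F'.filter (fun y => x < y)).min' hne
    else x₀ + 1 with hnxtdef
  have hnxt_gt : ∀ x ∈ F', x < nxt x := by
    intro x hx
    by_cases hne : (F'.filter (fun y => x < y)).Nonempty
    · have h2 := Finset.mem_filter.mp (Finset.min'_mem _ hne)
      simp only [hnxtdef, dif_pos hne]
      exact h2.2
    · simp only [hnxtdef, dif_neg hne]
      linarith [(hmem x hx).2.2]
  have hnxt_good : ∀ x ∈ F', goodFix ht q p a b (nxt x) := by
    intro x hx
    by_cases hne : (F'.filter (fun y => x < y)).Nonempty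
    · have h2 := Finset.mem_filter.mp (Finset.min'_mem _ hne)
      simp only [hnxtdef, dif_pos hne]
      exact (hmem _ h2.1).1
    · simp only [hnxtdef, dif_neg hne]
      simpa using goodFix_add_int hdeg hx₀ 1
  have hnxt_le : ∀ x ∈ F', nxt x ≤ x₀ + 1 := by
    intro x hx
    by_cases hne : (F'.filter (fun y => x < y)).Nonempty
    · have h2 := Finset.mem_filter.mp (Finset.min'_mem _ hne)
      simp only [hnxtdef, dif_pos hne]
      linarith [(hmem _ h2.1).2.2]
    · simp only [hnxtdef, dif_neg hne]
      exact le_refl _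
  have hnxt_min : ∀ x ∈ F', ∀ y ∈ F', x < y → nxt x ≤ y := by
    intro x hx y hy hxy
    have hne : (F'.filter (fun z => x < z)).Nonempty :=
      ⟨y, Finset.mem_filter.mpr ⟨hy, hxy⟩⟩
    simp only [hnxtdef, dif_pos hne]
    exact Finset.min'_le _ y (Finset.mem_filter.mpr ⟨hy, hxy⟩)
  have key : ∀ x, ∀ hx : x ∈ F', ∃ ji : Fin q × Fin l, ∃ n : ℤ,
      ht^[(ji.1 : ℕ)] x ≤ a ji.2 + n ∧ b ji.2 + (n : ℝ) ≤ ht^[(ji.1 : ℕ)] (nxt x) := by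
    intro x hx
    obtain ⟨z, hz, j, hj, i, n, hmemz⟩ := exists_entry hTc hTm hD hq
      (hmem x hx).1.1 (hnxt_good x hx).1 (hnxt_gt x hx)
    refine ⟨(⟨j, hj⟩, i), n, ?_, ?_⟩
    · by_contra hlt
      push_neg at hlt
      have h1 : ht^[j] x ≤ ht^[j] z := (hTm.iterate j) hz.1
      exact ((hmem x hx).1.2 j) i n ⟨hlt, lt_of_le_of_lt h1 hmemz.2⟩
    · by_contra hlt
      push_neg at hlt
      have h1 : ht^[j] z ≤ ht^[j] (nxt x) := (hTm.iterate j) hz.2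
      exact ((hnxt_good x hx).2 j) i n ⟨lt_of_lt_of_le hmemz.1 h1, hlt⟩
  rcases Nat.eq_zero_or_pos l with hl0 | hl
  · obtain ⟨ji, -⟩ := key x₀ (Finset.mem_insert_self x₀ F)
    exact absurd ji.2.isLt (by omega)
  · haveI : Nonempty (Fin q) := ⟨⟨0, by omega⟩⟩
    haveI : Nonempty (Fin l) := ⟨⟨0, hl⟩⟩
    choose ch nch h1ch h2ch using key
    set chart : ℝ → Fin q × Fin l :=
      fun x => if hx : x ∈ F' then ch x hx else Classical.arbitrary _ with hchartdef
    have main : ∀ x, ∀ hx : x ∈ F', ∀ y, ∀ hy : y ∈ F', x < y → ch x hx = ch y hy → False := by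
      intro x hx y hy hxy heq
      have e1 := h1ch x hx
      have e2 := h2ch x hx
      have e3 := h1ch y hy
      have e4 := h2ch y hy
      rw [← heq] at e3 e4
      have c0 : ht^[((ch x hx).1 : ℕ)] x₀ ≤ ht^[((ch x hx).1 : ℕ)] x :=
        (hTm.iterate _) (hmem x hx).2.1
      have c3 : ht^[((ch x hx).1 : ℕ)] (nxt x) ≤ ht^[((ch x hx).1 : ℕ)] y :=
        (hTm.iterate _) (hnxt_min x hx y hy hxy)
      have c6 : ht^[((ch x hx).1 : ℕ)] (nxt y) ≤ ht^[((ch x hx).1 : ℕ)] (x₀ + 1) :=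
        (hTm.iterate _) (hnxt_le y hy)
      have c7 : ht^[((ch x hx).1 : ℕ)] (x₀ + 1) = ht^[((ch x hx).1 : ℕ)] x₀ + 1 :=
        Tn_add_one hdeg _ x₀
      have habi : a ((ch x hx).2) < b ((ch x hx).2) := hab _
      have hnn : ((nch x hx : ℤ) : ℝ) < ((nch y hy : ℤ) : ℝ) := by linarith
      have hnn' : ((nch x hx : ℤ) : ℝ) + 1 ≤ ((nch y hy : ℤ) : ℝ) := by
        have h5 : nch x hx < nch y hy := by exact_mod_cast hnn
        exact_mod_cast Int.add_one_le_iff.mpr h5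
      linarith
    have hinj : Set.InjOn chart ↑F' := by
      intro x hx y hy heq
      have hx' : x ∈ F' := hx
      have hy' : y ∈ F' := hy
      simp only [hchartdef, dif_pos hx', dif_pos hy'] at heq
      rcases lt_trichotomy x y with hlt | heq' | hlt
      · exact absurd heq (fun hh => main x hx' y hy' hlt hh)
      · exact heq'
      · exact absurd heq.symm (fun hh => main y hy' x hx' hlt hh)
    have hcard := Finset.card_le_card_of_injOn chart (fun x _ => Finset.mem_univ _) hinj
    have hcard2 : F'.card ≤ q * l := by
      simpa [Finset.card_univ] using hcard
    calc F.card ≤ F'.card := Finset.card_le_card (Finset.subset_insert x₀ F)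
      _ ≤ q * l := hcard2

private lemma exists_good (hTc : Continuous ht) (hTm : Monotone ht)
    (hdeg : ∀ x, ht (x + 1) = ht x + 1) (hfs : ∀ i, IsFlatSpot ht (a i) (b i)) {D : ℝ → ℝ}
    (hD : ∀ x ∈ flatComplR a b, 1 < D x ∧ HasDerivWithinAt ht (D x) (flatComplR a b) x)
    {p : ℤ} {q : ℕ} (hq : 1 ≤ q) (hrot : HasRotNum ht ((p : ℝ) / q)) :
    ∃ x, goodFix ht q p a b x := by
  set G : ℝ → ℝ := fun y => ht^[q] y - (p : ℝ) with hGdef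
  have hGc : Continuous G := (hTc.iterate q).sub continuous_const
  have hGm : Monotone G := fun u v huv => by
    have h1 := (hTm.iterate q) huv
    show ht^[q] u - (p : ℝ) ≤ ht^[q] v - (p : ℝ)
    linarith
  have hGdeg : ∀ x, G (x + 1) = G x + 1 := by
    intro x
    simp only [hGdef]
    rw [Tn_add_one hdeg]
    ring
  have hGfix : ∃ x, G x = x := exists_fixed_of_rot0 hGc hGm hGdeg (rot0G hdeg hq hrot)
  by_contra hno
  push_neg at hno
  have hbad : ∀ x, G x = x →
      ∃ j < q, ∃ (i : Fin l) (n : ℤ), ht^[j] x ∈ Ioo (a i + (n : ℝ)) (b i + (n : ℝ)) := by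
    intro x hx
    have hfix : ht^[q] x = x + p := by
      have h0 : ht^[q] x - (p : ℝ) = x := hx
      linarith
    have hqs : ∀ s : ℕ, ht^[q * s] x = x + (s : ℝ) * p := by
      intro s
      have h1 : G^[s] x = x := Function.iterate_fixed hx s
      have h2 := G_iter hdeg q p s x
      rw [← hGdef] at h2
      rw [h1] at h2
      linarith
    have hnx := hno x
    simp only [goodFix, not_and, not_forall] at hnx
    obtain ⟨j, hj⟩ := hnx hfix
    have hex : ∃ (i : Fin l) (n : ℤ), ht^[j] x ∈ Ioo (a i + (n : ℝ)) (b i + (n : ℝ)) := by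
      by_contra hc
      push_neg at hc
      exact hj (fun i n => hc i n)
    obtain ⟨i, n, hmem⟩ := hex
    set s : ℕ := j / q with hsdef
    set r : ℕ := j % q with hrdef
    refine ⟨r, by rw [hrdef]; exact Nat.mod_lt _ (by omega), i, n - (s : ℤ) * p, ?_⟩
    have hsplit : ht^[j] x = ht^[r] x + (s : ℝ) * p := by
      conv_lhs => rw [show j = r + q * s from by rw [hrdef, hsdef]; exact (Nat.mod_add_div j q).symm]
      rw [Function.iterate_add_apply, hqs s,
        show x + (s : ℝ) * p = x + (((s : ℤ) * p : ℤ) : ℝ) from by push_cast; ring,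
        Tn_add_int hdeg]
      push_cast
      ring
    constructor
    · have := hmem.1
      push_cast
      linarith
    · have := hmem.2
      push_cast
      linarith
  have hconstflat : ∀ (i : Fin l) (n : ℤ), ∀ w ∈ Icc (a i + (n : ℝ)) (b i + (n : ℝ)),
      ht w = ht (a i + (n : ℝ)) := by
    intro i n w hw
    have h1 : w - n ∈ Icc (a i) (b i) := ⟨by linarith [hw.1], by linarith [hw.2]⟩
    have h2 := (hfs i).2.2.1 _ h1
    have h3 := T_add_int hdeg n (w - n)
    rw [show w - (n : ℝ) + (n : ℝ) = w from by ring] at h3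
    have h4 := T_add_int hdeg n (a i)
    rw [h3, h2, ← h4]
  have hloc : ∀ x, G x = x → ∃ ε > 0, ∀ y, |y - x| ≤ ε → G y = x := by
    intro x hx
    obtain ⟨j, hj, i, n, hmem⟩ := hbad x hx
    have hopen : IsOpen ((ht^[j]) ⁻¹' (Ioo (a i + (n : ℝ)) (b i + (n : ℝ)))) :=
      isOpen_Ioo.preimage (hTc.iterate j)
    obtain ⟨ε, hε, hball⟩ := Metric.isOpen_iff.mp hopen x hmem
    refine ⟨ε / 2, by linarith, ?_⟩
    intro y hy
    have hyy : ht^[j] y ∈ Ioo (a i + (n : ℝ)) (b i + (n : ℝ)) := by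
      apply hball
      rw [Metric.mem_ball, Real.dist_eq]
      linarith
    have hstep : ht^[j + 1] y = ht^[j + 1] x := by
      rw [Function.iterate_succ_apply', Function.iterate_succ_apply',
        hconstflat i n _ (Ioo_subset_Icc_self hyy), hconstflat i n _ (Ioo_subset_Icc_self hmem)]
    have hqsplit : q = (q - (j + 1)) + (j + 1) := by omega
    have hiter : ht^[q] y = ht^[q] x := by
      conv_lhs => rw [hqsplit]
      rw [Function.iterate_add_apply ht (q - (j + 1)) (j + 1) y, hstep,
        ← Function.iterate_add_apply ht (q - (j + 1)) (j + 1) x, ← hqsplit]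
    have hx' : ht^[q] x - (p : ℝ) = x := hx
    show ht^[q] y - (p : ℝ) = x
    rw [hiter]
    linarith
  obtain ⟨z₀, hz₀⟩ := hGfix
  obtain ⟨ε₀, hε₀, hc₀⟩ := hloc z₀ hz₀
  have hz₁ : G (z₀ + 1) = z₀ + 1 := by rw [hGdeg, hz₀]
  obtain ⟨ε₁, hε₁, hc₁⟩ := hloc (z₀ + 1) hz₁
  set e0 : ℝ := min ε₀ 4⁻¹ with he0def
  set e1 : ℝ := min ε₁ 4⁻¹ with he1def
  have he0 : 0 < e0 := lt_min hε₀ (by norm_num)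
  have he1 : 0 < e1 := lt_min hε₁ (by norm_num)
  have he0' : e0 ≤ 4⁻¹ := min_le_right _ _
  have he1' : e1 ≤ 4⁻¹ := min_le_right _ _
  set α : ℝ := z₀ + e0 with hαdef
  set β : ℝ := z₀ + 1 - e1 with hβdef
  have h4inv : (4 : ℝ)⁻¹ + 4⁻¹ < 1 := by norm_num
  have hαβ : α < β := by rw [hαdef, hβdef]; linarith
  have hGα : G α = z₀ := by
    apply hc₀
    have h5 : α - z₀ = e0 := by rw [hαdef]; ring
    rw [h5, abs_of_nonneg he0.le]
    exact min_le_left _ _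
  have hGβ : G β = z₀ + 1 := by
    apply hc₁
    have h5 : β - (z₀ + 1) = -e1 := by rw [hβdef]; ring
    rw [h5, abs_neg, abs_of_nonneg he1.le]
    exact min_le_left _ _
  have hFα : G α - α < 0 := by rw [hGα, hαdef]; linarith
  have hFβ : 0 < G β - β := by rw [hGβ, hβdef]; linarith
  set K : Set ℝ := Icc α β ∩ {y | G y = y} with hKdef
  have hKne : K.Nonempty := by
    have hFc : ContinuousOn (fun y => G y - y) (Icc α β) :=
      (hGc.sub continuous_id).continuousOn
    have hmem0 : (0 : ℝ) ∈ (fun y => G y - y) '' Icc α β := by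
      apply intermediate_value_Icc hαβ.le hFc
      have h6 : (fun y => G y - y) α ≤ 0 := by show G α - α ≤ 0; linarith
      have h7 : 0 ≤ (fun y => G y - y) β := by show (0 : ℝ) ≤ G β - β; linarith
      exact ⟨h6, h7⟩
    obtain ⟨t, htm, htv⟩ := hmem0
    have htv2 : G t - t = 0 := htv
    exact ⟨t, htm, show G t = t by linarith⟩
  have hKcl : IsClosed K := isClosed_Icc.inter (isClosed_eq hGc continuous_id)
  have hKbdd : BddBelow K := (bddBelow_Icc).mono (Set.inter_subset_left)
  set t := sInf K with htdef
  have htK : t ∈ K := hKcl.csInf_mem hKne hKbdd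
  have htfix : G t = t := htK.2
  have htα : α < t := by
    rcases lt_or_eq_of_le htK.1.1 with h | h
    · exact h
    · exfalso
      rw [← h] at htfix
      rw [htfix] at hFα
      linarith
  obtain ⟨ε₂, hε₂, hc₂⟩ := hloc t htfix
  rcases le_or_gt (t - ε₂) α with hca | hca
  · have : G α = t := hc₂ α (by rw [abs_of_nonpos (by linarith)]; linarith)
    rw [this] at hFα
    linarith
  · set γ : ℝ := t - ε₂ with hγdef
    have hγβ : γ < β := by rw [hγdef]; linarith [htK.1.2]
    have hGγ : G γ = t := by
      apply hc₂
      have h5 : γ - t = -ε₂ := by rw [hγdef]; ring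
      rw [h5, abs_neg, abs_of_nonneg hε₂.le]
    have hFγ : 0 < G γ - γ := by rw [hGγ, hγdef]; linarith
    have hFc : ContinuousOn (fun y => G y - y) (Icc α γ) :=
      (hGc.sub continuous_id).continuousOn
    have hmem0 : (0 : ℝ) ∈ (fun y => G y - y) '' Icc α γ := by
      apply intermediate_value_Icc (by linarith : α ≤ γ) hFc
      have h6 : (fun y => G y - y) α ≤ 0 := by show G α - α ≤ 0; linarith
      have h7 : 0 ≤ (fun y => G y - y) γ := by show (0 : ℝ) ≤ G γ - γ; linarith
      exact ⟨h6, h7⟩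
    obtain ⟨t', htm', htv'⟩ := hmem0
    have htv2 : G t' - t' = 0 := htv'
    have ht'K : t' ∈ K := ⟨⟨htm'.1, by linarith [htm'.2]⟩, show G t' = t' by linarith⟩
    have : t ≤ t' := csInf_le hKbdd ht'K
    have : t' ≤ γ := htm'.2
    rw [hγdef] at this
    linarith

private lemma dict {h : Circle1 → Circle1} (hlift : ∀ x, h (mk1 x) = mk1 (ht x))
    (hTm : Monotone ht) (hdeg : ∀ x, ht (x + 1) = ht x + 1)
    {p : ℤ} {q : ℕ} (hq : 1 ≤ q) (hcop : Int.gcd p q = 1)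
    (hrot : HasRotNum ht ((p : ℝ) / q))
    (ξ : Circle1) (n₀ : ℕ) (hn₀ : 0 < n₀) (hper : h^[n₀] ξ = ξ)
    (horb : ∀ j : ℕ, h^[j] ξ ∈ flatComplC a b) :
    q ∣ n₀ ∧ ∃ x' : ℝ, mk1 x' = ξ ∧ goodFix ht q p a b x' := by
  obtain ⟨x', hx'⟩ := Quotient.exists_rep ξ
  have hx'2 : mk1 x' = ξ := hx'
  have h1 : mk1 (ht^[n₀] x') = mk1 x' := by
    rw [← h_iter_mk1 hlift, hx'2, hper]
  obtain ⟨m, hm⟩ := mk1_eq_mk1_iff.mp h1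
  have hmul : ∀ s : ℕ, ht^[n₀ * s] x' = x' + (s : ℝ) * m := by
    intro s
    induction s with
    | zero => simp
    | succ s ih =>
        rw [show n₀ * (s + 1) = n₀ + n₀ * s from by ring, Function.iterate_add_apply, ih,
          show x' + (s : ℝ) * m = x' + (((s : ℤ) * m : ℤ) : ℝ) from by push_cast; ring,
          Tn_add_int hdeg, hm]
        push_cast
        ring
  have hlim : Tendsto (fun s : ℕ => (ht^[n₀ * s] x' - x') / ((n₀ * s : ℕ) : ℝ)) atTop
      (𝓝 ((p : ℝ) / q)) := by
    apply (hrot x').comp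
    apply StrictMono.tendsto_atTop
    intro c d hcd
    exact mul_lt_mul_of_pos_left hcd (by omega)
  have hconst : Tendsto (fun s : ℕ => (ht^[n₀ * s] x' - x') / ((n₀ * s : ℕ) : ℝ)) atTop
      (𝓝 ((m : ℝ) / n₀)) := by
    have hev : (fun _ : ℕ => ((m : ℝ) / n₀)) =ᶠ[atTop]
        (fun s : ℕ => (ht^[n₀ * s] x' - x') / ((n₀ * s : ℕ) : ℝ)) := by
      filter_upwards [eventually_ge_atTop 1] with s hs
      rw [hmul s]
      have hs0 : (s : ℝ) ≠ 0 := by positivity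
      have hn0 : (n₀ : ℝ) ≠ 0 := by positivity
      push_cast
      field_simp
      ring
    exact Tendsto.congr' hev tendsto_const_nhds
  have heq : (m : ℝ) / n₀ = (p : ℝ) / q := tendsto_nhds_unique hconst hlim
  have hmq : m * (q : ℤ) = p * (n₀ : ℤ) := by
    have hq0 : (q : ℝ) ≠ 0 := by positivity
    have hn0 : (n₀ : ℝ) ≠ 0 := by positivity
    have h2 : (m : ℝ) * q = p * n₀ := by
      field_simp at heq
      linarith
    exact_mod_cast h2
  have hdvd : (q : ℤ) ∣ (n₀ : ℤ) := by
    have hco : IsCoprime (q : ℤ) p := (Int.isCoprime_iff_gcd_eq_one.mpr hcop).symm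
    have hd : (q : ℤ) ∣ p * (n₀ : ℤ) := ⟨m, by linarith⟩
    exact hco.dvd_of_dvd_mul_left hd
  have hdvdN : q ∣ n₀ := by exact_mod_cast hdvd
  refine ⟨hdvdN, x', hx'2, ?_, ?_⟩
  · obtain ⟨s, hs⟩ := hdvdN
    have hs1 : 0 < s := by
      rcases Nat.eq_zero_or_pos s with rfl | hs1
      · omega
      · exact hs1
    have hq0 : (q : ℤ) ≠ 0 := by omega
    have hms : m = p * (s : ℤ) := by
      apply mul_right_cancel₀ hq0
      rw [hmq, hs]
      push_cast
      ring
    have hGs : (fun y => ht^[q] y - (p : ℝ))^[s] x' = x' := by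
      rw [G_iter hdeg q p s x', show q * s = n₀ from hs.symm, hm, hms]
      push_cast
      ring
    have hGmono : Monotone (fun y => ht^[q] y - (p : ℝ)) := fun u v huv => by
      have h3 := (hTm.iterate q) huv
      show ht^[q] u - (p : ℝ) ≤ ht^[q] v - (p : ℝ)
      linarith
    have h4 := fix_of_iter_fix hGmono hs1 hGs
    have h5 : ht^[q] x' - (p : ℝ) = x' := h4
    show ht^[q] x' = x' + (p : ℝ)
    linarith
  · intro j
    apply mem_flatComplR_of
    have h6 := horb j
    rw [← hx'2, h_iter_mk1 hlift] at h6
    exact h6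

end AuxStatement4

/-- A semi-monotone circle map with ℓ flat spots, expanding on
the positive-slope region, with rotation number p/q in lowest terms, has at least
one and at most ℓ periodic orbits wholly contained in the positive-slope region. -/
theorem statement4 (ht : ℝ → ℝ) (hsm : IsSemiMonotoneLift ht)
    (h : Circle1 → Circle1) (hlift : ∀ x, h (mk1 x) = mk1 (ht x))
    (l : ℕ) (a b : Fin l → ℝ)
    (hfs : ∀ i, IsFlatSpot ht (a i) (b i))
    (hrep : ∀ i, a i ∈ Set.Ico (0 : ℝ) 1)
    (hdist : Function.Injective a)
    (hall : ∀ a' b' : ℝ, IsFlatSpot ht a' b' → ∃ i, ∃ n : ℤ, a' = a i + n ∧ b' = b i + n)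
    (D : ℝ → ℝ) (hDcont : ContinuousOn D (flatComplR a b))
    (hD : ∀ x ∈ flatComplR a b, 1 < D x ∧ HasDerivWithinAt ht (D x) (flatComplR a b) x)
    (p : ℤ) (q : ℕ) (hq : 1 ≤ q) (hcop : Int.gcd p q = 1)
    (hrot : HasRotNum ht ((p : ℝ) / q)) :
    ∀ PO : Set (Set Circle1),
      PO = {O | ∃ x : Circle1, (∃ n, 0 < n ∧ h^[n] x = x) ∧ O = fwdOrbit h x ∧
        O ⊆ flatComplC a b} →
      PO.Nonempty ∧ PO.Finite ∧ PO.ncard ≤ l := by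
  intro PO hPO
  obtain ⟨hTc, hTm, hTd⟩ := hsm
  have hab : ∀ i, a i < b i := fun i => (hfs i).1
  obtain ⟨x₀, hx₀⟩ := exists_good hTc hTm hTd hfs hD hq hrot
  set W : Set ℝ := {x | goodFix ht q p a b x ∧ x ∈ Set.Ico x₀ (x₀ + 1)} with hWdef
  have hWcard : ∀ F : Finset ℝ, ↑F ⊆ W → F.card ≤ q * l := by
    intro F hF
    apply card_bound hTc hTm hTd hab hD hq hx₀
    intro x hx
    exact hF hx
  have hWfin : W.Finite := by
    by_contra hinf
    obtain ⟨F, hFsub, hFcard⟩ := Set.Infinite.exists_subset_card_eq hinf (q * l + 1)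
    have := hWcard F hFsub
    omega
  have hWn : W.ncard ≤ q * l := by
    rw [Set.ncard_eq_toFinset_card _ hWfin]
    exact hWcard _ (by simp)
  set S : Set Circle1 := mk1 '' W with hSdef
  have hSfin : S.Finite := hWfin.image mk1
  have hSn : S.ncard ≤ q * l := le_trans (Set.ncard_image_le hWfin) hWn
  have hPOmem : ∀ O ∈ PO, ∃ x : Circle1, (∃ n, 0 < n ∧ h^[n] x = x) ∧ O = fwdOrbit h x ∧
      O ⊆ flatComplC a b := by
    intro O hO
    rw [hPO] at hO
    exact hO
  have hkey : ∀ O ∈ PO, ∀ ξ ∈ O, ξ ∈ S ∧ h^[q] ξ = ξ ∧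
      (∀ nn, 0 < nn → h^[nn] ξ = ξ → q ∣ nn) := by
    intro O hO ξ hξ
    obtain ⟨x, ⟨n₀, hn₀, hxper⟩, hOx, hOsub⟩ := hPOmem O hO
    rw [hOx] at hξ
    obtain ⟨m₀, hm₀⟩ := hξ
    have hξper : h^[n₀] ξ = ξ := by
      rw [← hm₀, ← Function.iterate_add_apply, Nat.add_comm, Function.iterate_add_apply, hxper]
    have hξorb : ∀ j : ℕ, h^[j] ξ ∈ flatComplC a b := by
      intro j
      apply hOsub
      rw [hOx, ← hm₀, ← Function.iterate_add_apply]
      exact ⟨j + m₀, rfl⟩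
    obtain ⟨hdvd, x', hx', hgood⟩ := dict hlift hTm hTd hq hcop hrot ξ n₀ hn₀ hξper hξorb
    refine ⟨?_, ?_, ?_⟩
    · set k : ℤ := ⌊x' - x₀⌋ with hkdef
      refine ⟨x' + ((-k : ℤ) : ℝ), ⟨goodFix_add_int hTd hgood (-k), ?_, ?_⟩, ?_⟩
      · have h7 := Int.floor_le (x' - x₀)
        rw [← hkdef] at h7
        push_cast
        linarith
      · have h7 := Int.lt_floor_add_one (x' - x₀)
        rw [← hkdef] at h7
        push_cast
        linarith
      · rw [← hx']
        exact mk1_eq_mk1_iff.mpr ⟨-k, rfl⟩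
    · rw [← hx', h_iter_mk1 hlift, hgood.1]
      exact mk1_eq_mk1_iff.mpr ⟨p, rfl⟩
    · intro nn hnn hpernn
      exact (dict hlift hTm hTd hq hcop hrot ξ nn hnn hpernn hξorb).1
  have horbcard : ∀ O ∈ PO, O.Finite ∧ O.ncard = q := by
    intro O hO
    obtain ⟨x, hxper', hOx, hOsub⟩ := hPOmem O hO
    have hxO : x ∈ O := by
      rw [hOx]
      exact ⟨0, rfl⟩
    obtain ⟨-, hxq, hxdvd⟩ := hkey O hO x hxO
    have hmod : ∀ n : ℕ, h^[n] x = h^[n % q] x := by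
      intro n
      induction n using Nat.strong_induction_on with
      | _ n ih =>
        rcases lt_or_ge n q with hlt | hge
        · rw [Nat.mod_eq_of_lt hlt]
        · have h1 : h^[n] x = h^[n - q] x := by
            conv_lhs => rw [show n = (n - q) + q from by omega]
            rw [Function.iterate_add_apply, hxq]
          rw [h1, ih (n - q) (by omega), Nat.mod_eq_sub_mod hge]
    have hOfinset : O = ↑((Finset.range q).image (fun m => h^[m] x)) := by
      rw [hOx]
      ext ζ
      simp only [fwdOrbit, Set.mem_range, Finset.coe_image, Set.mem_image, Finset.mem_coe,
        Finset.mem_range]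
      constructor
      · rintro ⟨n, rfl⟩
        exact ⟨n % q, Nat.mod_lt _ (by omega), (hmod n).symm⟩
      · rintro ⟨mm, hmm, rfl⟩
        exact ⟨mm, rfl⟩
    have main2 : ∀ i j : ℕ, i < j → j < q → h^[i] x = h^[j] x → False := by
      intro i j hij hjq heq
      have h1 : h^[(q - j) + i] x = x := by
        rw [Function.iterate_add_apply, heq, ← Function.iterate_add_apply,
          show (q - j) + j = q from by omega, hxq]
      have h2 := hxdvd ((q - j) + i) (by omega) h1
      have h3 := Nat.le_of_dvd (by omega) h2
      omega
    have hinj2 : Set.InjOn (fun m => h^[m] x) ↑(Finset.range q) := by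
      intro i hi j hj heq
      simp only [Finset.coe_range, Set.mem_Iio] at hi hj
      rcases lt_trichotomy i j with hlt | heq' | hlt
      · exact absurd heq (fun hh => main2 i j hlt hj hh)
      · exact heq'
      · exact absurd heq.symm (fun hh => main2 j i hlt hi hh)
    have hcard : ((Finset.range q).image (fun m => h^[m] x)).card = q := by
      rw [Finset.card_image_of_injOn hinj2]
      exact Finset.card_range q
    constructor
    · rw [hOfinset]
      exact Finset.finite_toSet _
    · rw [hOfinset, Set.ncard_coe_finset, hcard]
  have hOrbEq : ∀ O ∈ PO, ∀ ξ ∈ O, O = fwdOrbit h ξ := by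
    intro O hO ξ hξ
    obtain ⟨x, hxper', hOx, hOsub⟩ := hPOmem O hO
    obtain ⟨-, hxq, -⟩ := hkey O hO x (by rw [hOx]; exact ⟨0, rfl⟩)
    rw [hOx] at hξ ⊢
    obtain ⟨m₀, hm₀⟩ := hξ
    have hfix2 : h^[q * m₀] x = x := by
      rw [Function.iterate_mul]
      exact Function.iterate_fixed hxq m₀
    have hm₀' : h^[m₀] x = ξ := hm₀
    ext ζ
    simp only [fwdOrbit, Set.mem_range]
    constructor
    · rintro ⟨n, rfl⟩
      refine ⟨n + q * m₀ - m₀, ?_⟩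
      have hle : m₀ ≤ q * m₀ := Nat.le_mul_of_pos_left m₀ (by omega)
      rw [← hm₀', ← Function.iterate_add_apply, show (n + q * m₀ - m₀) + m₀ = n + q * m₀ from by
        omega, Function.iterate_add_apply, hfix2]
    · rintro ⟨n, rfl⟩
      exact ⟨n + m₀, by rw [← hm₀', ← Function.iterate_add_apply]⟩
  have hdisj : ∀ O ∈ PO, ∀ O' ∈ PO, O ≠ O' → Disjoint O O' := by
    intro O hO O' hO' hne
    rw [Set.disjoint_left]
    intro ξ hξ hξ'
    exact hne ((hOrbEq O hO ξ hξ).trans (hOrbEq O' hO' ξ hξ').symm)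
  have hOsubS : ∀ O ∈ PO, O ⊆ S := fun O hO ξ hξ => (hkey O hO ξ hξ).1
  have hPOfin : PO.Finite := hSfin.finite_subsets.subset (fun O hO => hOsubS O hO)
  classical
  set POf := hPOfin.toFinset with hPOfdef
  set Ofin : Set Circle1 → Finset Circle1 :=
    fun O => if hf : O.Finite then hf.toFinset else ∅ with hOfindef
  have hOfin_coe : ∀ O ∈ PO, ↑(Ofin O) = O := by
    intro O hO
    have hf := (horbcard O hO).1
    simp only [hOfindef, dif_pos hf]
    exact hf.coe_toFinset
  have hOfin_card : ∀ O ∈ PO, (Ofin O).card = q := by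
    intro O hO
    have hf := (horbcard O hO).1
    simp only [hOfindef, dif_pos hf]
    rw [← Set.ncard_eq_toFinset_card O hf]
    exact (horbcard O hO).2
  have hmemPOf : ∀ O, O ∈ POf ↔ O ∈ PO := by
    intro O
    rw [hPOfdef]
    exact Set.Finite.mem_toFinset _
  have hbiUcard : (POf.biUnion Ofin).card = POf.card * q := by
    rw [Finset.card_biUnion]
    · rw [Finset.sum_congr rfl (fun O hO => hOfin_card O ((hmemPOf O).mp hO))]
      simp [Finset.sum_const, smul_eq_mul]
    · intro O hO O' hO' hne
      show Disjoint (Ofin O) (Ofin O')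
      rw [← Finset.disjoint_coe, hOfin_coe O ((hmemPOf O).mp hO),
        hOfin_coe O' ((hmemPOf O').mp hO')]
      exact hdisj O ((hmemPOf O).mp hO) O' ((hmemPOf O').mp hO') hne
  have hsubS : POf.biUnion Ofin ⊆ hSfin.toFinset := by
    intro ξ hξ
    rw [Finset.mem_biUnion] at hξ
    obtain ⟨O, hO, hξO⟩ := hξ
    have hO' : O ∈ PO := (hmemPOf O).mp hO
    rw [Set.Finite.mem_toFinset]
    apply hOsubS O hO'
    rw [← hOfin_coe O hO']
    exact hξO
  have hcount : POf.card * q ≤ q * l := by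
    calc POf.card * q = (POf.biUnion Ofin).card := hbiUcard.symm
      _ ≤ hSfin.toFinset.card := Finset.card_le_card hsubS
      _ = S.ncard := (Set.ncard_eq_toFinset_card _ hSfin).symm
      _ ≤ q * l := hSn
  have hPOn : PO.ncard ≤ l := by
    have h1 : PO.ncard = POf.card := Set.ncard_eq_toFinset_card _ hPOfin
    have h2 : POf.card * q ≤ l * q := by
      rw [Nat.mul_comm l q]
      exact hcount
    rw [h1]
    exact Nat.le_of_mul_le_mul_right h2 (by omega)
  have hne : PO.Nonempty := by
    refine ⟨fwdOrbit h (mk1 x₀), ?_⟩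
    rw [hPO]
    refine ⟨mk1 x₀, ⟨q, by omega, ?_⟩, rfl, ?_⟩
    · rw [h_iter_mk1 hlift, hx₀.1]
      exact mk1_eq_mk1_iff.mpr ⟨p, rfl⟩
    · rintro ξ ⟨n, rfl⟩
      show h^[n] (mk1 x₀) ∈ flatComplC a b
      rw [h_iter_mk1 hlift]
      exact mem_flatComplC_of (hx₀.2 n)
  exact ⟨hne, hPOfin, hPOn⟩
end

section
/- Let h̃ be a semi-monotone degree-one lift descending to h : S¹ → S¹, suppose h has exactly ℓ flat spots J₁,…,J_ℓ, and on P(h) = S¹ minus the interiors of the flat spots h is C¹ with one-sided derivatives > 1. Assume ρ(h̃) = α is irrational and let Z be the unique minimal set of h. Call a flat spot J_i tight if both endpoints of J_i lie in Z, and loose otherwise. Then J_i is loose if and only if there exist n > 0 and an index i' with hⁿ(J_i) ⊆ J_{i'} (note hⁿ(J_i) is a single point for n ≥ 1). In particular, at least one flat spot is tight. -/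
open Set Filter Topology MeasureTheory Function
open scoped ENNReal Classical

namespace S5
open Set Filter Topology Function

lemma mk1_eq_iff {x y : ℝ} : mk1 x = mk1 y ↔ ∃ t : ℤ, x = y + t := by
  constructor
  · intro h
    have := QuotientAddGroup.eq_iff_sub_mem.mp h
    obtain ⟨t, ht⟩ := AddSubgroup.mem_zmultiples_iff.mp this
    refine ⟨t, ?_⟩
    have : (t : ℝ) * 1 = x - y := by rw [← zsmul_eq_mul]; exact_mod_cast ht
    linarith
  · rintro ⟨t, rfl⟩
    show ((y + t : ℝ) : Circle1) = y
    rw [AddCircle.coe_add]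
    simp

lemma mk1_add_int (x : ℝ) (t : ℤ) : mk1 (x + t) = mk1 x := mk1_eq_iff.mpr ⟨t, rfl⟩

variable {ht : ℝ → ℝ} {h : Circle1 → Circle1}

lemma ht_add_int (hsm : IsSemiMonotoneLift ht) (x : ℝ) (t : ℤ) : ht (x + t) = ht x + t := by
  have hnat : ∀ (n : ℕ) (y : ℝ), ht (y + n) = ht y + n := by
    intro n
    induction n with
    | zero => simp
    | succ k ih =>
      intro y
      have := hsm.2.2 (y + k)
      push_cast
      push_cast at ih this
      rw [show y + ((k:ℝ) + 1) = (y + k) + 1 by ring, this, ih]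
      ring
  rcases t with n | n
  · simpa using hnat n x
  · have := hnat (n+1) (x + Int.negSucc n)
    have e : (x + Int.negSucc n) + ((n+1 : ℕ) : ℝ) = x := by
      push_cast [Int.negSucc_eq]; ring
    rw [e] at this
    push_cast [Int.negSucc_eq] at this ⊢
    linarith

lemma iter_add_int (hsm : IsSemiMonotoneLift ht) (n : ℕ) (x : ℝ) (t : ℤ) :
    ht^[n] (x + t) = ht^[n] x + t := by
  induction n generalizing x with
  | zero => simp
  | succ k ih =>
    rw [Function.iterate_succ_apply, Function.iterate_succ_apply, ht_add_int hsm, ih]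

lemma iter_mono (hsm : IsSemiMonotoneLift ht) (n : ℕ) : Monotone (ht^[n]) :=
  hsm.2.1.iterate n

lemma iter_cont (hsm : IsSemiMonotoneLift ht) (n : ℕ) : Continuous (ht^[n]) :=
  hsm.1.iterate n

lemma iter_lift (hlift : ∀ x, h (mk1 x) = mk1 (ht x)) (n : ℕ) (x : ℝ) :
    h^[n] (mk1 x) = mk1 (ht^[n] x) := by
  induction n generalizing x with
  | zero => simp
  | succ k ih =>
    rw [Function.iterate_succ_apply, hlift, ih, Function.iterate_succ_apply]

lemma h_cont (hsm : IsSemiMonotoneLift ht) (hlift : ∀ x, h (mk1 x) = mk1 (ht x)) :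
    Continuous h := by
  have hq : IsQuotientMap (mk1) :=
    QuotientAddGroup.isQuotientMap_mk (AddSubgroup.zmultiples (1:ℝ))
  rw [hq.continuous_iff]
  have e : (h ∘ mk1) = fun x => mk1 (ht x) := funext hlift
  rw [e]
  exact continuous_quotient_mk'.comp hsm.1

/-- Master irrationality contradiction: an orbit advancing by `j` per `m` steps
up to bounded error forces rotation number `j/m`. -/
lemma rot_rat_contra {α : ℝ} (hirr : Irrational α) (hrot : HasRotNum ht α)
    {x : ℝ} {m : ℕ} {j : ℤ} {C : ℝ} (hm : 1 ≤ m)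
    (hb : ∀ k : ℕ, 1 ≤ k → |ht^[k*m] x - x - k*j| ≤ C) : False := by
  have h1 : Tendsto (fun k : ℕ => (ht^[k*m] x - x) / (k*m : ℕ)) atTop (𝓝 α) :=
    (hrot x).comp (tendsto_atTop_atTop_of_monotone
      (fun p q hpq => Nat.mul_le_mul_right m hpq)
      (fun b => ⟨b, Nat.le_mul_of_pos_right b (Nat.lt_of_lt_of_le Nat.zero_lt_one hm)⟩))
  have h2 : Tendsto (fun k : ℕ => (ht^[k*m] x - x) / (k*m : ℕ)) atTop (𝓝 ((j:ℝ)/m)) := by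
    have hdiff : Tendsto (fun k : ℕ => (ht^[k*m] x - x) / (k*m : ℕ) - (j:ℝ)/m) atTop (𝓝 0) := by
      have hden : Tendsto (fun k : ℕ => ((k*m : ℕ) : ℝ)) atTop atTop :=
        tendsto_natCast_atTop_atTop.comp (tendsto_atTop_atTop_of_monotone
          (fun p q hpq => Nat.mul_le_mul_right m hpq)
          (fun c => ⟨c, Nat.le_mul_of_pos_right c (Nat.lt_of_lt_of_le Nat.zero_lt_one hm)⟩))
      apply squeeze_zero_norm' (a := fun k : ℕ => C / ((k*m : ℕ) : ℝ))
      · filter_upwards [eventually_ge_atTop 1] with k hk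
        have hkm : (0:ℝ) < ((k*m : ℕ) : ℝ) := by
          have h1 : 1 ≤ k*m := Nat.one_le_iff_ne_zero.mpr (Nat.mul_ne_zero
            (Nat.one_le_iff_ne_zero.mp hk) (Nat.one_le_iff_ne_zero.mp hm))
          exact_mod_cast h1
        have hm0 : (m:ℝ) ≠ 0 := by positivity
        have e : (ht^[k*m] x - x) / ((k*m : ℕ) : ℝ) - (j:ℝ)/m
            = (ht^[k*m] x - x - k*j) / ((k*m : ℕ) : ℝ) := by
          have hk0 : (k:ℝ) ≠ 0 := by
            have : (1:ℝ) ≤ k := by exact_mod_cast hk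
            linarith
          push_cast
          field_simp
        rw [e, Real.norm_eq_abs, abs_div, abs_of_pos hkm]
        gcongr
        exact hb k hk
      · exact Tendsto.div_atTop tendsto_const_nhds hden
    have := hdiff.add (tendsto_const_nhds (x := (j:ℝ)/m))
    simpa using this
  have hαeq : α = (j:ℝ)/m := tendsto_nhds_unique h1 h2
  exact hirr ⟨(j:ℚ)/m, by push_cast; exact hαeq.symm⟩

/-- The lift of `Z` to the line. -/
def ZLift (Z : Set Circle1) : Set ℝ := mk1 ⁻¹' Z

variable {Z : Set Circle1} {l : ℕ} {a b : Fin l → ℝ} {α : ℝ}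

lemma ZL_closed (hZ : IsMinimalSet h Z) : IsClosed (ZLift Z) :=
  hZ.2.1.isClosed.preimage continuous_quotient_mk'

lemma ZL_add_int {x : ℝ} (hx : x ∈ ZLift Z) (t : ℤ) : x + t ∈ ZLift Z := by
  have : mk1 (x + t) = mk1 x := mk1_add_int x t
  simpa [ZLift, Set.mem_preimage, this] using hx

lemma ZL_iter (hZ : IsMinimalSet h Z) (hlift : ∀ x, h (mk1 x) = mk1 (ht x)) {x : ℝ}
    (hx : x ∈ ZLift Z) (n : ℕ) : ht^[n] x ∈ ZLift Z := by
  have : h^[n] (mk1 x) ∈ Z := (hZ.2.2.1.iterate n) hx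
  rwa [iter_lift hlift] at this

lemma ZL_nonempty (hZ : IsMinimalSet h Z) : (ZLift Z).Nonempty := by
  obtain ⟨z, hz⟩ := hZ.1
  obtain ⟨x, rfl⟩ := Quot.exists_rep z
  exact ⟨x, hz⟩

lemma ZL_window (hZ : IsMinimalSet h Z) (x : ℝ) : ∃ w ∈ ZLift Z, x ≤ w ∧ w < x + 1 := by
  obtain ⟨z, hz⟩ := ZL_nonempty hZ
  refine ⟨z + ⌈x - z⌉, ZL_add_int hz _, ?_, ?_⟩
  · have := Int.le_ceil (x - z); linarith
  · have := Int.ceil_lt_add_one (x - z); linarith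

lemma no_periodic (hsm : IsSemiMonotoneLift ht) (hirr : Irrational α) (hrot : HasRotNum ht α)
    {x : ℝ} {m : ℕ} {j : ℤ} (hm : 1 ≤ m) (hp : ht^[m] x = x + j) : False := by
  refine rot_rat_contra hirr hrot hm (C := 0) (x := x) (j := j) ?_
  have key : ∀ k : ℕ, ht^[k*m] x = x + k*j := by
    intro k
    induction k with
    | zero => simp
    | succ n ih =>
      have : (n+1)*m = m + n*m := by ring
      rw [this, Function.iterate_add_apply, ih]
      have e : x + (n:ℝ)*j = x + ((n*j : ℤ) : ℝ) := by push_cast; ring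
      rw [e, iter_add_int hsm, hp]
      push_cast; ring
  intro k _
  rw [key k]
  simp

lemma not_isolated (hsm : IsSemiMonotoneLift ht) (hlift : ∀ x, h (mk1 x) = mk1 (ht x))
    (hirr : Irrational α) (hrot : HasRotNum ht α) (hZ : IsMinimalSet h Z)
    {z : Circle1} (hz : z ∈ Z) {U : Set Circle1} (hU : IsOpen U) (hzU : z ∈ U) :
    ∃ y ∈ Z, y ∈ U ∧ y ≠ z := by
  have hh : h z ∈ Z := hZ.2.2.1 hz
  have hd : z ∈ closure (fwdOrbit h (h z)) := hZ.2.2.2 _ hh hz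
  rw [mem_closure_iff] at hd
  obtain ⟨y, hyU, m, rfl⟩ := hd U hU hzU
  have hyZ : h^[m] (h z) ∈ Z := (hZ.2.2.1.iterate m) hh
  refine ⟨_, hyZ, hyU, ?_⟩
  intro hEq
  obtain ⟨x, rfl⟩ := Quot.exists_rep z
  have : h^[m+1] (mk1 x) = mk1 x := by
    rw [Function.iterate_succ_apply]; exact hEq
  rw [iter_lift hlift] at this
  obtain ⟨t, htt⟩ := mk1_eq_iff.mp this
  exact no_periodic hsm hirr hrot (Nat.le_add_left 1 m) htt

/-- The minimal set avoids the interior of any interval of constancy. -/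
lemma Z_avoid (hsm : IsSemiMonotoneLift ht) (hlift : ∀ x, h (mk1 x) = mk1 (ht x))
    (hirr : Irrational α) (hrot : HasRotNum ht α) (hZ : IsMinimalSet h Z)
    {A B : ℝ} (hAB : A < B) (hflat : ∀ x ∈ Icc A B, ht x = ht A)
    {x : ℝ} (hx : x ∈ ZLift Z) : x ∉ Ioo A B := by
  intro hxI
  have hz : mk1 x ∈ Z := hx
  have hp : h (mk1 x) ∈ Z := hZ.2.2.1 hz
  have hpx : h (mk1 x) = mk1 (ht A) := by
    rw [hlift, hflat x ⟨le_of_lt hxI.1, le_of_lt hxI.2⟩]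
  have hd : mk1 x ∈ closure (fwdOrbit h (h (mk1 x))) := hZ.2.2.2 _ hp hz
  rw [mem_closure_iff] at hd
  have hUopen : IsOpen (mk1 '' Ioo A B) := QuotientAddGroup.isOpenMap_coe _ isOpen_Ioo
  obtain ⟨y, hyU, m, hym⟩ := hd _ hUopen ⟨x, hxI, rfl⟩
  obtain ⟨w, hwI, hwy⟩ := hyU
  have e0 : h^[m] (h (mk1 x)) = y := hym
  have hper : h^[m+1] (mk1 (ht A)) = mk1 (ht A) := by
    have e1 : h^[m] (mk1 (ht A)) = mk1 w := by
      rw [← hpx, e0]; exact hwy.symm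
    rw [Function.iterate_succ_apply', e1, hlift, hflat w ⟨le_of_lt hwI.1, le_of_lt hwI.2⟩]
  rw [iter_lift hlift] at hper
  obtain ⟨t, htt⟩ := mk1_eq_iff.mp hper
  exact no_periodic hsm hirr hrot (Nat.le_add_left 1 m) htt

/-- Every interval of constancy extends to a (translated) maximal flat spot. -/
lemma flat_extend (hsm : IsSemiMonotoneLift ht)
    (hall : ∀ a' b' : ℝ, IsFlatSpot ht a' b' → ∃ i : Fin l, ∃ n : ℤ, a' = a i + n ∧ b' = b i + n)
    {p q : ℝ} (hpq : p < q) (hc : ht q = ht p) :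
    ∃ (i : Fin l) (k : ℤ), a i + k ≤ p ∧ q ≤ b i + k ∧ a i + k < b i + k ∧
      ∀ x ∈ Icc (a i + (k:ℝ)) (b i + k), ht x = ht (a i + k) := by
  classical
  set S : Set ℝ := ht ⁻¹' {ht p} with hS
  have hmono := hsm.2.1
  have hpS : p ∈ S := rfl
  have hqS : q ∈ S := hc
  have hSsub : S ⊆ Icc (p - 1) (q + 1) := by
    intro x hx
    have hxv : ht x = ht p := hx
    constructor
    · by_contra hlt
      push_neg at hlt
      have : ht x ≤ ht (p - 1) := hmono (le_of_lt hlt)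
      have e : ht (p - 1) = ht p - 1 := by
        have h1 := ht_add_int hsm (p - 1) 1
        have e2 : (p - 1) + ((1:ℤ):ℝ) = p := by push_cast; ring
        rw [e2] at h1; push_cast at h1; linarith
      rw [hxv, e] at this; linarith
    · by_contra hlt
      push_neg at hlt
      have : ht (q + 1) ≤ ht x := hmono (le_of_lt hlt)
      have e : ht (q + 1) = ht q + 1 := by
        have := ht_add_int hsm q 1; push_cast at this; linarith
      rw [hxv, e, hc] at this; linarith
  have hScl : IsClosed S := IsClosed.preimage hsm.1 isClosed_singleton
  have hSne : S.Nonempty := ⟨p, hpS⟩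
  have hbdd_above : BddAbove S := ⟨q + 1, fun x hx => (hSsub hx).2⟩
  have hbdd_below : BddBelow S := ⟨p - 1, fun x hx => (hSsub hx).1⟩
  set c := sInf S
  set d := sSup S
  have hcS : c ∈ S := hScl.csInf_mem hSne hbdd_below
  have hdS : d ∈ S := hScl.csSup_mem hSne hbdd_above
  have hcp : c ≤ p := csInf_le hbdd_below hpS
  have hqd : q ≤ d := le_csSup hbdd_above hqS
  have hcd : c < d := lt_of_le_of_lt hcp (lt_of_lt_of_le hpq hqd)
  have hIccS : ∀ x ∈ Icc c d, ht x = ht c := by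
    intro x hx
    have h1 : ht c ≤ ht x := hmono hx.1
    have h2 : ht x ≤ ht d := hmono hx.2
    have e1 : ht c = ht p := hcS
    have e2 : ht d = ht p := hdS
    rw [e1]; rw [e1] at h1; rw [e2] at h2; linarith
  have hd1 : d - c < 1 := by
    by_contra hge
    push_neg at hge
    have hmem : c + 1 ∈ Icc c d := ⟨by linarith, by linarith⟩
    have := hIccS (c + 1) hmem
    have e : ht (c + 1) = ht c + 1 := by
      have := ht_add_int hsm c 1; push_cast at this; linarith
    rw [e] at this; linarith
  have hflat : IsFlatSpot ht c d := by
    refine ⟨hcd, hd1, hIccS, ?_⟩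
    intro a' b' ha' hb' hconst
    have ha'S : a' ∈ S := by
      have : ht a' = ht c := hconst a' ⟨le_refl _, le_trans ha' (le_of_lt hcd) |>.trans hb'⟩
      have e1 : ht c = ht p := hcS
      show ht a' = ht p
      rw [this, e1]
    have hb'S : b' ∈ S := by
      have h1 : ht b' = ht c := hconst b' ⟨le_trans ha' (le_of_lt hcd) |>.trans hb', le_refl _⟩
      have e1 : ht c = ht p := hcS
      show ht b' = ht p
      rw [h1, e1]
    exact ⟨le_antisymm ha' (csInf_le hbdd_below ha'S),
      le_antisymm (le_csSup hbdd_above hb'S) hb'⟩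
  obtain ⟨i, k, hik, hjk⟩ := hall c d hflat
  refine ⟨i, k, ?_, ?_, ?_, ?_⟩
  · rw [← hik]; exact hcp
  · rw [← hjk]; exact hqd
  · rw [← hik, ← hjk]; exact hcd
  · rw [← hik, ← hjk]; exact hIccS

/-- A nondegenerate interval of constancy between two points of `Z`
is exactly a (translated) flat spot. -/
lemma gap_flat (hsm : IsSemiMonotoneLift ht) (hlift : ∀ x, h (mk1 x) = mk1 (ht x))
    (hirr : Irrational α) (hrot : HasRotNum ht α) (hZ : IsMinimalSet h Z)
    (hall : ∀ a' b' : ℝ, IsFlatSpot ht a' b' → ∃ i : Fin l, ∃ n : ℤ, a' = a i + n ∧ b' = b i + n)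
    {p q : ℝ} (hp : p ∈ ZLift Z) (hq : q ∈ ZLift Z) (hpq : p < q) (hc : ht q = ht p) :
    ∃ (i : Fin l) (k : ℤ), p = a i + k ∧ q = b i + k ∧
      (∀ x ∈ ZLift Z, x ∉ Ioo (a i + (k:ℝ)) (b i + k)) := by
  obtain ⟨i, k, h1, h2, h3, h4⟩ := flat_extend hsm hall hpq hc
  have havoid := fun {x} hx => Z_avoid hsm hlift hirr hrot hZ h3 h4 (x := x) hx
  have hpe : p = a i + k := by
    rcases eq_or_lt_of_le h1 with hEq | hlt
    · exact hEq.symm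
    · exfalso
      exact havoid hp ⟨hlt, lt_of_lt_of_le hpq h2⟩
  have hqe : q = b i + k := by
    rcases eq_or_lt_of_le h2 with hEq | hlt
    · exact hEq
    · exfalso
      exact havoid hq ⟨lt_of_le_of_lt h1 hpq, hlt⟩
  exact ⟨i, k, hpe, hqe, fun x hx => havoid hx⟩

lemma surjZ (hsm : IsSemiMonotoneLift ht) (hlift : ∀ x, h (mk1 x) = mk1 (ht x))
    (hZ : IsMinimalSet h Z) : Z ⊆ h '' Z := by
  obtain ⟨z0, hz0⟩ := hZ.1
  intro w hw
  have hd : w ∈ closure (fwdOrbit h (h z0)) := hZ.2.2.2 _ (hZ.2.2.1 hz0) hw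
  have himg : fwdOrbit h (h z0) ⊆ h '' Z := by
    rintro _ ⟨m, rfl⟩
    refine ⟨h^[m] z0, (hZ.2.2.1.iterate m) hz0, ?_⟩
    rw [← Function.iterate_succ_apply' h m z0, Function.iterate_succ_apply]
  have hcl : IsClosed (h '' Z) := (hZ.2.1.image (h_cont hsm hlift)).isClosed
  exact (IsClosed.closure_subset_iff hcl).mpr himg hd

lemma flat_const_translate (hsm : IsSemiMonotoneLift ht) {A B : ℝ}
    (hflat : ∀ x ∈ Icc A B, ht x = ht A) (t : ℤ) :
    ∀ x ∈ Icc (A + (t:ℝ)) (B + t), ht x = ht (A + t) := by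
  intro x hx
  have hx' : x - t ∈ Icc A B := ⟨by linarith [hx.1], by linarith [hx.2]⟩
  have e1 : ht x = ht (x - t) + t := by
    have := ht_add_int hsm (x - t) t
    rw [show x - (t:ℝ) + t = x by ring] at this
    linarith
  rw [e1, hflat _ hx', ht_add_int hsm A t]

lemma not_isolated_pt (hsm : IsSemiMonotoneLift ht) (hlift : ∀ x, h (mk1 x) = mk1 (ht x))
    (hirr : Irrational α) (hrot : HasRotNum ht α) (hZ : IsMinimalSet h Z)
    {r lft rgt : ℝ} (hr : r ∈ ZLift Z) (h1 : lft < r) (h2 : r < rgt)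
    (hL : ∀ x ∈ ZLift Z, x ∉ Ioo lft r) (hR : ∀ x ∈ ZLift Z, x ∉ Ioo r rgt) : False := by
  set η := min (r - lft) (rgt - r) with hη
  have hη0 : 0 < η := lt_min (by linarith) (by linarith)
  have hUopen : IsOpen (mk1 '' Ioo (r - η) (r + η)) :=
    QuotientAddGroup.isOpenMap_coe _ isOpen_Ioo
  obtain ⟨y, hyZ, hyU, hyne⟩ := not_isolated hsm hlift hirr hrot hZ hr hUopen
    ⟨r, ⟨by linarith, by linarith⟩, rfl⟩
  obtain ⟨c, hcI, hcy⟩ := hyU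
  have hcZ : c ∈ ZLift Z := by rw [ZLift, Set.mem_preimage, hcy]; exact hyZ
  have hcne : c ≠ r := fun hEq => hyne (by rw [← hcy, hEq])
  have hle1 : η ≤ r - lft := min_le_left _ _
  have hle2 : η ≤ rgt - r := min_le_right _ _
  rcases lt_or_gt_of_ne hcne with hlt | hgt
  · exact hL c hcZ ⟨by linarith [hcI.1], hlt⟩
  · exact hR c hcZ ⟨hgt, by linarith [hcI.2]⟩

lemma approach_right (hsm : IsSemiMonotoneLift ht) (hlift : ∀ x, h (mk1 x) = mk1 (ht x))
    (hirr : Irrational α) (hrot : HasRotNum ht α) (hZ : IsMinimalSet h Z)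
    {lft r : ℝ} (hr : r ∈ ZLift Z) (h1 : lft < r)
    (hL : ∀ x ∈ ZLift Z, x ∉ Ioo lft r) {ε : ℝ} (hε : 0 < ε) :
    ∃ w ∈ ZLift Z, r < w ∧ w < r + ε := by
  by_contra hno
  push_neg at hno
  refine not_isolated_pt hsm hlift hirr hrot hZ hr h1 (show r < r + ε by linarith) hL ?_
  intro x hx hxI
  exact absurd hxI.2 (not_lt.mpr (hno x hx hxI.1))

lemma approach_left (hsm : IsSemiMonotoneLift ht) (hlift : ∀ x, h (mk1 x) = mk1 (ht x))
    (hirr : Irrational α) (hrot : HasRotNum ht α) (hZ : IsMinimalSet h Z)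
    {r rgt : ℝ} (hr : r ∈ ZLift Z) (h1 : r < rgt)
    (hR : ∀ x ∈ ZLift Z, x ∉ Ioo r rgt) {ε : ℝ} (hε : 0 < ε) :
    ∃ w ∈ ZLift Z, r - ε < w ∧ w < r := by
  by_contra hno
  push_neg at hno
  refine not_isolated_pt hsm hlift hirr hrot hZ hr (show r - ε < r by linarith) h1 ?_ hR
  intro x hx hxI
  exact absurd hxI.2 (not_lt.mpr (hno x hx hxI.1))

lemma descentR (hsm : IsSemiMonotoneLift ht) (hlift : ∀ x, h (mk1 x) = mk1 (ht x))
    (hirr : Irrational α) (hrot : HasRotNum ht α) (hZ : IsMinimalSet h Z)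
    (hall : ∀ a' b' : ℝ, IsFlatSpot ht a' b' → ∃ i : Fin l, ∃ n : ℤ, a' = a i + n ∧ b' = b i + n)
    {i : Fin l} (hfsi : IsFlatSpot ht (a i) (b i)) (hbZ : b i ∈ ZLift Z) :
    ∀ n : ℕ, 1 ≤ n → ∀ δ : ℝ, 0 < δ →
      (∀ x ∈ ZLift Z, x ∉ Ioo (ht^[n] (b i)) (ht^[n] (b i) + δ)) → False := by
  intro n
  induction n using Nat.strong_induction_on with
  | _ n IH =>
    intro hn δ hδ hgap
    set A := ht^[n] (b i) with hA
    have hAZ : A ∈ ZLift Z := ZL_iter hZ hlift hbZ n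
    -- continuity: pick ε so that points within ε of b i map below A + δ
    have hV : IsOpen ((ht^[n]) ⁻¹' (Iio (A + δ))) := (iter_cont hsm n).isOpen_preimage _ isOpen_Iio
    have hbV : b i ∈ (ht^[n]) ⁻¹' (Iio (A + δ)) := by
      simp only [Set.mem_preimage, Set.mem_Iio, ← hA]
      linarith
    obtain ⟨ε, hε0, hball⟩ := Metric.isOpen_iff.mp hV _ hbV
    have hL : ∀ x ∈ ZLift Z, x ∉ Ioo (a i) (b i) :=
      fun x hx => Z_avoid hsm hlift hirr hrot hZ hfsi.1 hfsi.2.2.1 hx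
    obtain ⟨w, hwZ, hwgt, hwlt⟩ := approach_right hsm hlift hirr hrot hZ hbZ hfsi.1 hL hε0
    have hwV : ht^[n] w < A + δ := by
      have : w ∈ Metric.ball (b i) ε := by
        rw [Real.ball_eq_Ioo]
        exact ⟨by linarith, hwlt⟩
      exact hball this
    have hwA : A ≤ ht^[n] w := iter_mono hsm n (le_of_lt hwgt)
    have hwEq : ht^[n] w = A := by
      rcases eq_or_lt_of_le hwA with hEq | hlt
      · exact hEq.symm
      · exact absurd ⟨hlt, hwV⟩ (hgap _ (ZL_iter hZ hlift hwZ n))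
    -- largest j with strict inequality
    set P : ℕ → Prop := fun j' => ht^[j'] (b i) < ht^[j'] w with hP
    have hP0 : P 0 := by simpa [hP] using hwgt
    set j := Nat.findGreatest P n with hj
    have hPj : P j := Nat.findGreatest_spec (Nat.zero_le n) hP0
    have hjle : j ≤ n := Nat.findGreatest_le n
    have hjn : j ≠ n := by
      intro hEq
      rw [hj] at hEq
      have := hPj
      rw [hj, hEq] at this
      exact absurd hwEq (ne_of_gt this)
    have hjlt : j < n := lt_of_le_of_ne hjle hjn
    have hPj1 : ¬ P (j + 1) := Nat.findGreatest_is_greatest (Nat.lt_succ_self j) hjlt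
    have hEqj1 : ht^[j+1] (b i) = ht^[j+1] w := by
      have hle : ht^[j+1] (b i) ≤ ht^[j+1] w := iter_mono hsm _ (le_of_lt hwgt)
      rcases eq_or_lt_of_le hle with hEq | hlt
      · exact hEq
      · exact absurd hlt hPj1
    set p := ht^[j] (b i) with hp
    set q := ht^[j] w with hq
    have hpq : p < q := hPj
    have hflatpq : ht q = ht p := by
      have e1 : ht^[j+1] (b i) = ht p := Function.iterate_succ_apply' ht j (b i)
      have e2 : ht^[j+1] w = ht q := Function.iterate_succ_apply' ht j w
      rw [e1, e2] at hEqj1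
      exact hEqj1.symm
    have hpZ : p ∈ ZLift Z := ZL_iter hZ hlift hbZ j
    have hqZ : q ∈ ZLift Z := ZL_iter hZ hlift hwZ j
    obtain ⟨i₂, k, hpe, hqe, hG2⟩ :=
      gap_flat hsm hlift hirr hrot hZ hall hpZ hqZ hpq hflatpq
    have hG2' : ∀ x ∈ ZLift Z, x ∉ Ioo p q := by
      intro x hx
      rw [hpe, hqe]
      exact hG2 x hx
    rcases Nat.eq_zero_or_pos j with hj0 | hj1
    · -- j = 0 : b i isolated in Z, contradiction
      have hpb : p = b i := by rw [hp, hj0]; simp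
      refine not_isolated_pt hsm hlift hirr hrot hZ (rgt := q) hbZ hfsi.1 ?_ hL ?_
      · rw [← hpb]; exact hpq
      · intro x hx hxI
        exact hG2' x hx (by rwa [hpb])
    · -- j ≥ 1 : recurse
      refine IH j hjlt hj1 (q - p) (by linarith) ?_
      intro x hx
      have : (ht^[j] (b i)) = p := rfl
      rw [this, show p + (q - p) = q by ring]
      exact hG2' x hx

lemma descentL (hsm : IsSemiMonotoneLift ht) (hlift : ∀ x, h (mk1 x) = mk1 (ht x))
    (hirr : Irrational α) (hrot : HasRotNum ht α) (hZ : IsMinimalSet h Z)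
    (hall : ∀ a' b' : ℝ, IsFlatSpot ht a' b' → ∃ i : Fin l, ∃ n : ℤ, a' = a i + n ∧ b' = b i + n)
    {i : Fin l} (hfsi : IsFlatSpot ht (a i) (b i)) (haZ : a i ∈ ZLift Z) :
    ∀ n : ℕ, 1 ≤ n → ∀ δ : ℝ, 0 < δ →
      (∀ x ∈ ZLift Z, x ∉ Ioo (ht^[n] (a i) - δ) (ht^[n] (a i))) → False := by
  intro n
  induction n using Nat.strong_induction_on with
  | _ n IH =>
    intro hn δ hδ hgap
    set A := ht^[n] (a i) with hA
    have hAZ : A ∈ ZLift Z := ZL_iter hZ hlift haZ n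
    have hV : IsOpen ((ht^[n]) ⁻¹' (Ioi (A - δ))) := (iter_cont hsm n).isOpen_preimage _ isOpen_Ioi
    have hbV : a i ∈ (ht^[n]) ⁻¹' (Ioi (A - δ)) := by
      simp only [Set.mem_preimage, Set.mem_Ioi, ← hA]
      linarith
    obtain ⟨ε, hε0, hball⟩ := Metric.isOpen_iff.mp hV _ hbV
    have hR : ∀ x ∈ ZLift Z, x ∉ Ioo (a i) (b i) :=
      fun x hx => Z_avoid hsm hlift hirr hrot hZ hfsi.1 hfsi.2.2.1 hx
    obtain ⟨w, hwZ, hwgt, hwlt⟩ := approach_left hsm hlift hirr hrot hZ haZ hfsi.1 hR hε0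
    have hwV : A - δ < ht^[n] w := by
      have : w ∈ Metric.ball (a i) ε := by
        rw [Real.ball_eq_Ioo]
        exact ⟨hwgt, by linarith⟩
      exact hball this
    have hwA : ht^[n] w ≤ A := iter_mono hsm n (le_of_lt hwlt)
    have hwEq : ht^[n] w = A := by
      rcases eq_or_lt_of_le hwA with hEq | hlt
      · exact hEq
      · exact absurd ⟨hwV, hlt⟩ (hgap _ (ZL_iter hZ hlift hwZ n))
    set P : ℕ → Prop := fun j' => ht^[j'] w < ht^[j'] (a i) with hP
    have hP0 : P 0 := by simpa [hP] using hwlt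
    set j := Nat.findGreatest P n with hj
    have hPj : P j := Nat.findGreatest_spec (Nat.zero_le n) hP0
    have hjle : j ≤ n := Nat.findGreatest_le n
    have hjn : j ≠ n := by
      intro hEq
      have h2 := hPj
      rw [hEq] at h2
      exact absurd hwEq (ne_of_lt h2)
    have hjlt : j < n := lt_of_le_of_ne hjle hjn
    have hPj1 : ¬ P (j + 1) := Nat.findGreatest_is_greatest (Nat.lt_succ_self j) hjlt
    have hEqj1 : ht^[j+1] w = ht^[j+1] (a i) := by
      have hle : ht^[j+1] w ≤ ht^[j+1] (a i) := iter_mono hsm _ (le_of_lt hwlt)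
      rcases eq_or_lt_of_le hle with hEq | hlt
      · exact hEq
      · exact absurd hlt hPj1
    set p := ht^[j] w with hp
    set q := ht^[j] (a i) with hq
    have hpq : p < q := hPj
    have hflatpq : ht q = ht p := by
      have e1 : ht^[j+1] w = ht p := Function.iterate_succ_apply' ht j w
      have e2 : ht^[j+1] (a i) = ht q := Function.iterate_succ_apply' ht j (a i)
      rw [e1, e2] at hEqj1
      exact hEqj1.symm
    have hpZ : p ∈ ZLift Z := ZL_iter hZ hlift hwZ j
    have hqZ : q ∈ ZLift Z := ZL_iter hZ hlift haZ j
    obtain ⟨i₂, k, hpe, hqe, hG2⟩ :=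
      gap_flat hsm hlift hirr hrot hZ hall hpZ hqZ hpq hflatpq
    have hG2' : ∀ x ∈ ZLift Z, x ∉ Ioo p q := by
      intro x hx
      rw [hpe, hqe]
      exact hG2 x hx
    rcases Nat.eq_zero_or_pos j with hj0 | hj1
    · have hqw : q = a i := by rw [hq, hj0]; simp
      refine not_isolated_pt hsm hlift hirr hrot hZ (lft := p) haZ ?_ hfsi.1 ?_ hR
      · rw [← hqw]; exact hpq
      · intro x hx hxI
        exact hG2' x hx (by rwa [hqw])
    · refine IH j hjlt hj1 (q - p) (by linarith) ?_
      intro x hx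
      have e : (ht^[j] (a i)) = q := rfl
      rw [e, show q - (q - p) = p by ring]
      exact hG2' x hx

lemma iter_flat_collapse (hsm : IsSemiMonotoneLift ht) {A B x : ℝ} (hx : x ∈ Icc A B)
    (hflat : ∀ y ∈ Icc A B, ht y = ht A) {n : ℕ} (hn : 1 ≤ n) : ht^[n] x = ht^[n] A := by
  obtain ⟨m, rfl⟩ : ∃ m, n = m + 1 := ⟨n - 1, (Nat.succ_pred_eq_of_pos hn).symm⟩
  rw [Function.iterate_succ_apply, Function.iterate_succ_apply, hflat x hx,
    ← hflat A ⟨le_refl _, hx.1.trans hx.2⟩]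

lemma partA (hsm : IsSemiMonotoneLift ht) (hlift : ∀ x, h (mk1 x) = mk1 (ht x))
    (hirr : Irrational α) (hrot : HasRotNum ht α) (hZ : IsMinimalSet h Z)
    (hall : ∀ a' b' : ℝ, IsFlatSpot ht a' b' → ∃ i : Fin l, ∃ n : ℤ, a' = a i + n ∧ b' = b i + n)
    {i i' : Fin l} (hfsi : IsFlatSpot ht (a i) (b i)) (hfsi' : IsFlatSpot ht (a i') (b i'))
    (haZ : mk1 (a i) ∈ Z) (hbZ : mk1 (b i) ∈ Z) {n : ℕ} (hn : 0 < n)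
    (himg : ∀ x ∈ Icc (a i) (b i), h^[n] (mk1 x) ∈ mk1 '' Icc (a i') (b i')) : False := by
  have haZL : a i ∈ ZLift Z := haZ
  have hbZL : b i ∈ ZLift Z := hbZ
  have hmem := himg (a i) ⟨le_refl _, le_of_lt hfsi.1⟩
  rw [iter_lift hlift] at hmem
  obtain ⟨y, hyI, hye⟩ := hmem
  set z := ht^[n] (a i) with hz
  obtain ⟨t, hty⟩ := mk1_eq_iff.mp hye
  have hzZ : z ∈ ZLift Z := ZL_iter hZ hlift haZL n
  have hyZ : y ∈ ZLift Z := by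
    rw [hty]
    exact ZL_add_int hzZ t
  have hyIoo : y ∉ Ioo (a i') (b i') :=
    Z_avoid hsm hlift hirr hrot hZ hfsi'.1 hfsi'.2.2.1 hyZ
  have hbn : ht^[n] (b i) = z := by
    rw [hz]
    exact iter_flat_collapse hsm ⟨le_of_lt hfsi.1, le_refl _⟩ hfsi.2.2.1 hn
  have hδ : (0:ℝ) < b i' - a i' := by linarith [hfsi'.1]
  have havoid_tr : ∀ x ∈ ZLift Z, x ∉ Ioo (a i' + ((-t : ℤ):ℝ)) (b i' + ((-t : ℤ):ℝ)) := by
    intro x hx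
    refine Z_avoid hsm hlift hirr hrot hZ ?_ (flat_const_translate hsm hfsi'.2.2.1 (-t)) hx
    push_cast
    linarith [hfsi'.1]
  have hyab : y = a i' ∨ y = b i' := by
    rcases eq_or_lt_of_le hyI.1 with hEq | hlt
    · exact Or.inl hEq.symm
    · rcases eq_or_lt_of_le hyI.2 with hEq | hlt2
      · exact Or.inr hEq
      · exact absurd ⟨hlt, hlt2⟩ hyIoo
  rcases hyab with hya | hyb
  · -- z is the left endpoint of a translated flat spot: descentR
    refine descentR hsm hlift hirr hrot hZ hall hfsi hbZL n hn (b i' - a i') hδ ?_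
    intro x hx hxI
    refine havoid_tr x hx ?_
    have hz1 : ht^[n] (b i) = a i' + ((-t : ℤ):ℝ) := by
      rw [hbn]
      have : z = y - t := by linarith [hty]
      rw [this, hya]
      push_cast
      ring
    rw [hz1] at hxI
    constructor
    · exact hxI.1
    · have := hxI.2
      push_cast at this ⊢
      linarith
  · -- z is the right endpoint: descentL
    refine descentL hsm hlift hirr hrot hZ hall hfsi haZL n hn (b i' - a i') hδ ?_
    intro x hx hxI
    refine havoid_tr x hx ?_
    have hz1 : ht^[n] (a i) = b i' + ((-t : ℤ):ℝ) := by
      have : z = y - t := by linarith [hty]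
      rw [← hz, this, hyb]
      push_cast
      ring
    rw [hz1] at hxI
    constructor
    · have := hxI.1
      push_cast at this ⊢
      linarith
    · exact hxI.2

lemma partB (hsm : IsSemiMonotoneLift ht) (hlift : ∀ x, h (mk1 x) = mk1 (ht x))
    (hirr : Irrational α) (hrot : HasRotNum ht α) (hZ : IsMinimalSet h Z)
    (hall : ∀ a' b' : ℝ, IsFlatSpot ht a' b' → ∃ i : Fin l, ∃ n : ℤ, a' = a i + n ∧ b' = b i + n)
    (hfs : ∀ i, IsFlatSpot ht (a i) (b i))
    {D : ℝ → ℝ}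
    (hD : ∀ x ∈ flatComplR a b, 1 < D x ∧ HasDerivWithinAt ht (D x) (flatComplR a b) x)
    {i : Fin l} (hloose : ¬(mk1 (a i) ∈ Z ∧ mk1 (b i) ∈ Z)) :
    ∃ n, 0 < n ∧ ∃ i' : Fin l,
      ∀ x ∈ Icc (a i) (b i), h^[n] (mk1 x) ∈ mk1 '' Icc (a i') (b i') := by
  classical
  by_contra hno
  push_neg at hno
  have hfsi := hfs i
  have hab : a i < b i := hfsi.1
  -- the collapsed orbit avoids all closed flat spots
  have hAvoid : ∀ n : ℕ, 1 ≤ n → ∀ (i₂ : Fin l) (k : ℤ),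
      ht^[n] (a i) ∉ Icc (a i₂ + (k:ℝ)) (b i₂ + k) := by
    intro n hn i₂ k hmem
    obtain ⟨x, hxI, hximg⟩ := hno n hn i₂
    apply hximg
    rw [iter_lift hlift, iter_flat_collapse hsm hxI hfsi.2.2.1 hn]
    refine ⟨ht^[n] (a i) - k, ⟨by linarith [hmem.1], by linarith [hmem.2]⟩, ?_⟩
    exact mk1_eq_iff.mpr ⟨-k, by push_cast; ring⟩
  -- the gap around the flat spot
  have hSLne : (ZLift Z ∩ Iic (a i)).Nonempty := by
    obtain ⟨w, hw, hw1, hw2⟩ := ZL_window hZ (a i - 1)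
    exact ⟨w, hw, by simp only [Set.mem_Iic]; linarith⟩
  have hSLbdd : BddAbove (ZLift Z ∩ Iic (a i)) := ⟨a i, fun x hx => hx.2⟩
  have hSRne : (ZLift Z ∩ Ici (b i)).Nonempty := by
    obtain ⟨w, hw, hw1, hw2⟩ := ZL_window hZ (b i)
    exact ⟨w, hw, by simp only [Set.mem_Ici]; linarith⟩
  have hSRbdd : BddBelow (ZLift Z ∩ Ici (b i)) := ⟨b i, fun x hx => hx.2⟩
  have hZLcl : IsClosed (ZLift Z) := ZL_closed hZ
  set u0 := sSup (ZLift Z ∩ Iic (a i)) with hu0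
  set v0 := sInf (ZLift Z ∩ Ici (b i)) with hv0
  have hu0m : u0 ∈ ZLift Z ∩ Iic (a i) :=
    (hZLcl.inter isClosed_Iic).csSup_mem hSLne hSLbdd
  have hv0m : v0 ∈ ZLift Z ∩ Ici (b i) :=
    (hZLcl.inter isClosed_Ici).csInf_mem hSRne hSRbdd
  have hu0Z : u0 ∈ ZLift Z := hu0m.1
  have hv0Z : v0 ∈ ZLift Z := hv0m.1
  have hu0a : u0 ≤ a i := hu0m.2
  have hbv0 : b i ≤ v0 := hv0m.2
  have hu0v0 : u0 < v0 := lt_of_le_of_lt hu0a (lt_of_lt_of_le hab hbv0)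
  -- the interval of constancy of the flat spot avoids Z in its interior
  have hflat_avoid : ∀ x ∈ ZLift Z, x ∉ Ioo (a i) (b i) :=
    fun x hx => Z_avoid hsm hlift hirr hrot hZ hab hfsi.2.2.1 hx
  -- gap property at time 0
  have hgap0 : ∀ x ∈ ZLift Z, x ∉ Ioo u0 v0 := by
    intro x hx hxI
    rcases le_or_gt x (a i) with hxa | hxa
    · have : x ≤ u0 := le_csSup hSLbdd ⟨hx, hxa⟩
      linarith [hxI.1]
    · rcases le_or_gt (b i) x with hbx | hbx
      · have : v0 ≤ x := csInf_le hSRbdd ⟨hx, hbx⟩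
        linarith [hxI.2]
      · exact hflat_avoid x hx ⟨hxa, hbx⟩
  -- base length bound
  have hlen0 : v0 ≤ u0 + 1 := by
    obtain ⟨w, hw, hw1, hw2⟩ := ZL_window hZ (b i - 1)
    have hwa : w ≤ a i := by
      by_contra hgt
      push_neg at hgt
      exact hflat_avoid w hw ⟨hgt, by linarith⟩
    have hwu : w ≤ u0 := le_csSup hSLbdd ⟨hw, hwa⟩
    have h1 : u0 + 1 ∈ ZLift Z := by
      have := ZL_add_int hu0Z 1
      push_cast at this
      exact this
    have h2 : b i ≤ u0 + 1 := by linarith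
    exact csInf_le hSRbdd ⟨h1, h2⟩
  -- notation for the gap orbit
  set u : ℕ → ℝ := fun m => ht^[m] u0 with hu
  set v : ℕ → ℝ := fun m => ht^[m] v0 with hv
  have huZ : ∀ m, u m ∈ ZLift Z := fun m => ZL_iter hZ hlift hu0Z m
  have hvZ : ∀ m, v m ∈ ZLift Z := fun m => ZL_iter hZ hlift hv0Z m
  have husucc : ∀ m, u (m+1) = ht (u m) := fun m => Function.iterate_succ_apply' ht m u0
  have hvsucc : ∀ m, v (m+1) = ht (v m) := fun m => Function.iterate_succ_apply' ht m v0
  have huv : ∀ m, u m ≤ v m := fun m => iter_mono hsm m (le_of_lt hu0v0)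
  have hzmem : ∀ m, u m ≤ ht^[m] (a i) ∧ ht^[m] (a i) ≤ v m := fun m =>
    ⟨iter_mono hsm m hu0a, iter_mono hsm m (le_of_lt (lt_of_lt_of_le hab hbv0))⟩
  have hlen : ∀ m, v m ≤ u m + 1 := by
    intro m
    have h1 : v m ≤ ht^[m] (u0 + 1) := iter_mono hsm m hlen0
    have h2 : ht^[m] (u0 + ((1:ℤ):ℝ)) = ht^[m] u0 + ((1:ℤ):ℝ) := iter_add_int hsm m u0 1
    push_cast at h2
    rw [h2] at h1
    exact h1
  -- gap property at all times
  have hgap : ∀ m, ∀ x ∈ ZLift Z, x ∉ Ioo (u m) (v m) := by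
    intro m
    induction m with
    | zero => exact hgap0
    | succ m ih =>
      intro x hx hxI
      obtain ⟨zz, hzzZ, hzze⟩ := surjZ hsm hlift hZ (hx : mk1 x ∈ Z)
      obtain ⟨ξ, rfl⟩ := Quot.exists_rep zz
      have hzze' : h (mk1 ξ) = mk1 x := hzze
      rw [hlift] at hzze'
      obtain ⟨t, hte⟩ := mk1_eq_iff.mp hzze'.symm
      -- x = ht ξ + t
      have hξZ : (ξ : ℝ) ∈ ZLift Z := hzzZ
      have hξt : ξ + (t:ℝ) ∈ ZLift Z := by
        have := ZL_add_int hξZ t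
        exact this
      have hnot := ih _ hξt
      rw [Set.mem_Ioo, not_and_or] at hnot
      have hhtξt : ht (ξ + (t:ℝ)) = x := by
        rw [ht_add_int hsm ξ t]
        linarith
      rcases hnot with hle | hge
      · push_neg at hle
        have : ht (ξ + (t:ℝ)) ≤ ht (u m) := hsm.2.1 hle
        rw [hhtξt, ← husucc m] at this
        linarith [hxI.1]
      · push_neg at hge
        have : ht (v m) ≤ ht (ξ + (t:ℝ)) := hsm.2.1 hge
        rw [hhtξt, ← hvsucc m] at this
        linarith [hxI.2]
  -- nondegeneracy at all times
  have hult : ∀ m, u m < v m := by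
    intro m
    induction m with
    | zero => exact hu0v0
    | succ m ih =>
      rcases lt_or_ge (u (m+1)) (v (m+1)) with hlt | hle
      · exact hlt
      · exfalso
        have heq : ht (v m) = ht (u m) := by
          have h1 : ht (u m) ≤ ht (v m) := hsm.2.1 (le_of_lt ih)
          have h2 : ht (v m) ≤ ht (u m) := by
            rw [← husucc m, ← hvsucc m]
            exact hle
          linarith
        obtain ⟨i₂, k, h1, h2, h3, hconst⟩ := flat_extend hsm hall ih heq
        rcases Nat.eq_zero_or_pos m with hm0 | hm1
        · -- m = 0 : contradicts looseness via maximality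
          subst hm0
          have hu00 : u 0 = u0 := rfl
          have hv00 : v 0 = v0 := rfl
          rw [hu00] at h1
          rw [hv00] at h2
          have hconst' : ∀ x ∈ Icc (a i₂ + (k:ℝ)) (b i₂ + k), ht x = ht (a i) := by
            intro x hx
            rw [hconst x hx, ← hconst (a i) ⟨by linarith, by linarith⟩]
          obtain ⟨hae, hbe⟩ := hfsi.2.2.2 (a i₂ + k) (b i₂ + k)
            (by linarith) (by linarith) hconst'
          have hu0a' : u0 = a i := le_antisymm hu0a (by linarith)
          have hv0b' : v0 = b i := le_antisymm (by linarith) hbv0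
          apply hloose
          constructor
          · rw [← hu0a']; exact hu0Z
          · rw [← hv0b']; exact hv0Z
        · -- m ≥ 1 : the collapsed orbit is in a closed flat spot
          exact hAvoid m hm1 i₂ k ⟨le_trans h1 (hzmem m).1, le_trans (hzmem m).2 h2⟩
  -- flat interiors avoid Z (translated form)
  have hflat_tr : ∀ (i₂ : Fin l) (k : ℤ), ∀ x ∈ ZLift Z,
      x ∉ Ioo (a i₂ + (k:ℝ)) (b i₂ + k) := by
    intro i₂ k x hx
    refine Z_avoid hsm hlift hirr hrot hZ ?_ (flat_const_translate hsm (hfs i₂).2.2.1 k) hx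
    linarith [(hfs i₂).1]
  -- distinct gaps, even mod ℤ
  have hdisj : ∀ m m', m < m' → ∀ tt : ℤ, ∀ x,
      x ∈ Ioo (u m) (v m) → x ∈ Ioo (u m' + (tt:ℝ)) (v m' + tt) → False := by
    intro m m' hmm tt x hx1 hx2
    have hum't : u m' + (tt:ℝ) ∈ ZLift Z := ZL_add_int (huZ m') tt
    have hvm't : v m' + (tt:ℝ) ∈ ZLift Z := ZL_add_int (hvZ m') tt
    have hgap' : ∀ y ∈ ZLift Z, y ∉ Ioo (u m' + (tt:ℝ)) (v m' + tt) := by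
      intro y hy hyI
      have hyt : y + ((-tt : ℤ):ℝ) ∈ ZLift Z := ZL_add_int hy (-tt)
      refine hgap m' _ hyt ?_
      push_cast
      constructor
      · linarith [hyI.1]
      · linarith [hyI.2]
    have ueq : u m = u m' + (tt:ℝ) := by
      rcases lt_trichotomy (u m) (u m' + (tt:ℝ)) with hlt | heq | hgt
      · -- then u m' + tt ∈ Ioo (u m) (v m)
        exfalso
        exact hgap m _ hum't ⟨hlt, lt_trans hx2.1 hx1.2⟩
      · exact heq
      · exfalso
        exact hgap' _ (huZ m) ⟨hgt, lt_trans hx1.1 hx2.2⟩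
    have veq : v m = v m' + (tt:ℝ) := by
      rcases lt_trichotomy (v m) (v m' + (tt:ℝ)) with hlt | heq | hgt
      · exfalso
        exact hgap' _ (hvZ m) ⟨lt_trans hx2.1 hx1.2, hlt⟩
      · exact heq
      · exfalso
        exact hgap m _ hvm't ⟨lt_trans hx1.1 hx2.2, hgt⟩
    -- periodic point: contradiction
    have hiter : ht^[m' - m] (u m) = u m' := by
      rw [hu]
      rw [← Function.iterate_add_apply]
      congr 1
      omega
    have : ht^[m' - m] (u m) = u m + ((-tt : ℤ):ℝ) := by
      rw [hiter]
      push_cast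
      linarith
    exact no_periodic hsm hirr hrot (by omega) this
  -- flat interior meeting a gap is contained in it
  have hflat_in_gap : ∀ m (i₂ : Fin l) (k : ℤ),
      (Ioo (u m) (v m) ∩ Ioo (a i₂ + (k:ℝ)) (b i₂ + k)).Nonempty →
      Ioo (a i₂ + (k:ℝ)) (b i₂ + k) ⊆ Ioo (u m) (v m) := by
    intro m i₂ k ⟨x, hx1, hx2⟩
    have hu_le : u m ≤ a i₂ + k := by
      have hni := hflat_tr i₂ k (u m) (huZ m)
      rw [Set.mem_Ioo] at hni
      push_neg at hni
      by_contra hgt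
      push_neg at hgt
      have := hni hgt
      linarith [hx1.1, hx2.2]
    have hv_ge : b i₂ + (k:ℝ) ≤ v m := by
      have hni := hflat_tr i₂ k (v m) (hvZ m)
      rw [Set.mem_Ioo] at hni
      push_neg at hni
      by_contra hgt
      push_neg at hgt
      have h9 : a i₂ + (k:ℝ) < v m := lt_trans hx2.1 hx1.2
      have := hni h9
      linarith
    intro y hy
    exact ⟨lt_of_le_of_lt hu_le hy.1, lt_of_lt_of_le hy.2 hv_ge⟩
  -- the set of times whose gap contains flat material is finite
  set T : Set ℕ := {m | ∃ (i₂ : Fin l) (k : ℤ),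
    (Ioo (u m) (v m) ∩ Ioo (a i₂ + (k:ℝ)) (b i₂ + k)).Nonempty} with hT
  have hTfin : T.Finite := by
    have hsub : T ⊆ ⋃ i₂ : Fin l,
        {m | ∃ k : ℤ, Ioo (a i₂ + (k:ℝ)) (b i₂ + k) ⊆ Ioo (u m) (v m)} := by
      intro m hm
      obtain ⟨i₂, k, hne⟩ := hm
      exact Set.mem_iUnion.mpr ⟨i₂, k, hflat_in_gap m i₂ k hne⟩
    refine Set.Finite.subset (Set.finite_iUnion ?_) hsub
    intro i₂
    refine Set.Subsingleton.finite ?_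
    intro m hm m' hm'
    by_contra hne
    obtain ⟨k, hk⟩ := hm
    obtain ⟨k', hk'⟩ := hm'
    have hmid : ∀ (k0 : ℤ), (a i₂ + b i₂)/2 + (k0:ℝ) ∈ Ioo (a i₂ + (k0:ℝ)) (b i₂ + k0) := by
      intro k0
      constructor
      · linarith [(hfs i₂).1]
      · linarith [(hfs i₂).1]
    rcases lt_or_gt_of_ne hne with hlt | hgt
    · refine hdisj m m' hlt (k - k') ((a i₂ + b i₂)/2 + (k:ℝ)) (hk (hmid k)) ?_
      have h5 := hk' (hmid k')
      push_cast
      constructor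
      · linarith [h5.1]
      · linarith [h5.2]
    · refine hdisj m' m hgt (k' - k) ((a i₂ + b i₂)/2 + (k':ℝ)) (hk' (hmid k')) ?_
      have h5 := hk (hmid k)
      push_cast
      constructor
      · linarith [h5.1]
      · linarith [h5.2]
  -- beyond the finitely many bad times, gaps live in the expansion region
  obtain ⟨M0, hM0⟩ := hTfin.bddAbove
  set M := M0 + 1 with hMdef
  have hMT : ∀ m, M ≤ m → m ∉ T := by
    intro m hm hmT
    have := hM0 hmT
    omega
  have hsubPC : ∀ m, M ≤ m → Icc (u m) (v m) ⊆ flatComplR a b := by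
    intro m hm x hx
    intro i₂ k hxI
    rcases eq_or_lt_of_le hx.1 with he | hlt
    · exact hflat_tr i₂ k (u m) (huZ m) (by rw [he]; exact hxI)
    · rcases eq_or_lt_of_le hx.2 with he2 | hlt2
      · exact hflat_tr i₂ k (v m) (hvZ m) (by rw [← he2]; exact hxI)
      · exact hMT m hm ⟨i₂, k, x, ⟨hlt, hlt2⟩, hxI⟩
  -- expansion beyond time M
  have hexp : ∀ m, M ≤ m → v m - u m ≤ v (m+1) - u (m+1) := by
    intro m hm
    have hsub := hsubPC m hm
    have hintsub : interior (Icc (u m) (v m)) ⊆ flatComplR a b := by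
      rw [interior_Icc]
      exact fun y hy => hsub (Ioo_subset_Icc_self hy)
    have hsm' : StrictMonoOn (fun x => ht x - x) (Icc (u m) (v m)) := by
      refine strictMonoOn_of_hasDerivWithinAt_pos (f' := fun x => D x - 1) (convex_Icc _ _)
        ((hsm.1.sub continuous_id).continuousOn) ?_ ?_
      · intro x hx
        have hxP : x ∈ flatComplR a b := hintsub hx
        exact ((hD x hxP).2.mono hintsub).sub (hasDerivWithinAt_id x _)
      · intro x hx
        have hxP : x ∈ flatComplR a b := hintsub hx
        show 0 < D x - 1
        linarith [(hD x hxP).1]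
    have hlt := hsm' (left_mem_Icc.mpr (le_of_lt (hult m)))
      (right_mem_Icc.mpr (le_of_lt (hult m))) (hult m)
    simp only at hlt
    rw [husucc, hvsucc]
    linarith
  set c := v M - u M with hcdef
  have hc0 : 0 < c := by
    have := hult M
    rw [hcdef]
    linarith
  have hge : ∀ m, M ≤ m → c ≤ v m - u m := by
    intro m hm
    induction m with
    | zero =>
      have hM0' : M = 0 := Nat.le_zero.mp hm
      rw [hcdef, hM0']
    | succ m ih =>
      rcases eq_or_lt_of_le hm with he | hlt
      · rw [hcdef, he]
      · have hm' : M ≤ m := Nat.lt_succ_iff.mp hlt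
        exact le_trans (ih hm') (hexp m hm')
  -- counting: infinitely many disjoint arcs of length ≥ c on the circle
  set N := ⌈(3:ℝ)/c⌉₊ + 1 with hNdef
  set J : ℕ → Set ℝ := fun m => Ioo (u m - (⌊u m⌋ : ℝ)) (v m - ⌊u m⌋) with hJdef
  have hJmem : ∀ m x, x ∈ J m ↔ (x + ⌊u m⌋ ∈ Ioo (u m) (v m)) := by
    intro m x
    simp only [hJdef, Set.mem_Ioo]
    constructor
    · intro hx
      constructor
      · linarith [hx.1]
      · linarith [hx.2]
    · intro hx
      constructor
      · linarith [hx.1]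
      · linarith [hx.2]
  have hJdisj : (↑(Finset.Ico M (M+N)) : Set ℕ).PairwiseDisjoint J := by
    intro m _ m' _ hne
    rw [Function.onFun, Set.disjoint_left]
    intro x hx hx'
    rcases lt_or_gt_of_ne hne with hlt | hgt
    · refine hdisj m m' hlt (⌊u m⌋ - ⌊u m'⌋) (x + ⌊u m⌋) ((hJmem m x).mp hx) ?_
      have h6 := (hJmem m' x).mp hx'
      push_cast
      constructor
      · linarith [h6.1]
      · linarith [h6.2]
    · refine hdisj m' m hgt (⌊u m'⌋ - ⌊u m⌋) (x + ⌊u m'⌋) ((hJmem m' x).mp hx') ?_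
      have h6 := (hJmem m x).mp hx
      push_cast
      constructor
      · linarith [h6.1]
      · linarith [h6.2]
  have hJsub : ∀ m, J m ⊆ Ioo (-1 : ℝ) 2 := by
    intro m x hx
    have h1 := Int.floor_le (u m)
    have h2 := Int.lt_floor_add_one (u m)
    have h3 := hlen m
    simp only [hJdef, Set.mem_Ioo] at hx
    constructor
    · linarith [hx.1]
    · linarith [hx.2]
  have hvolsum :
      volume (⋃ m ∈ Finset.Ico M (M+N), J m) = ∑ m ∈ Finset.Ico M (M+N), volume (J m) :=
    measure_biUnion_finset hJdisj (fun m _ => measurableSet_Ioo)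
  have hle3 : volume (⋃ m ∈ Finset.Ico M (M+N), J m) ≤ ENNReal.ofReal 3 := by
    have hss : (⋃ m ∈ Finset.Ico M (M+N), J m) ⊆ Ioo (-1:ℝ) 2 := by
      intro x hx
      simp only [Set.mem_iUnion] at hx
      obtain ⟨m, _, hm⟩ := hx
      exact hJsub m hm
    calc volume (⋃ m ∈ Finset.Ico M (M+N), J m) ≤ volume (Ioo (-1:ℝ) 2) := measure_mono hss
    _ = ENNReal.ofReal 3 := by rw [Real.volume_Ioo]; norm_num
  have hcard : ∀ m ∈ Finset.Ico M (M+N), ENNReal.ofReal c ≤ volume (J m) := by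
    intro m hm
    have hmge : M ≤ m := (Finset.mem_Ico.mp hm).1
    have hvol : volume (J m) = ENNReal.ofReal (v m - ⌊u m⌋ - (u m - ⌊u m⌋)) := by
      simp only [hJdef]
      rw [Real.volume_Ioo]
    rw [hvol]
    apply ENNReal.ofReal_le_ofReal
    have := hge m hmge
    linarith
  have hsumge : (N : ℝ≥0∞) * ENNReal.ofReal c ≤ ∑ m ∈ Finset.Ico M (M+N), volume (J m) := by
    have e1 : (N : ℝ≥0∞) * ENNReal.ofReal c
        = ∑ _m ∈ Finset.Ico M (M+N), ENNReal.ofReal c := by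
      have e0 : M + N - M = N := by omega
      rw [Finset.sum_const, Nat.card_Ico, e0, nsmul_eq_mul]
    rw [e1]
    exact Finset.sum_le_sum hcard
  have hfin : ENNReal.ofReal ((N:ℝ) * c) ≤ ENNReal.ofReal 3 := by
    have e2 : ENNReal.ofReal ((N:ℝ) * c) = (N : ℝ≥0∞) * ENNReal.ofReal c := by
      rw [ENNReal.ofReal_mul (by positivity)]
      congr 1
      exact ENNReal.ofReal_natCast N
    rw [e2]
    exact le_trans (le_trans hsumge (le_of_eq hvolsum.symm)) hle3
  have hNc : (N:ℝ) * c ≤ 3 := by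
    have := (ENNReal.ofReal_le_ofReal_iff (by norm_num : (0:ℝ) ≤ 3)).mp hfin
    exact this
  have hNc2 : (3:ℝ) < (N:ℝ) * c := by
    have h7 : (3:ℝ)/c ≤ (⌈(3:ℝ)/c⌉₊ : ℝ) := Nat.le_ceil _
    have h8 : ((⌈(3:ℝ)/c⌉₊ : ℝ) + 1) * c = (N:ℝ) * c := by
      rw [hNdef]
      push_cast
      ring
    have h9 : (3:ℝ)/c * c = 3 := by field_simp
    nlinarith
  linarith

end S5

/-- With irrational rotation number and unique minimal set Z,
a flat spot is loose (some endpoint is outside Z) iff some forward image of it is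
contained in another flat spot; in particular at least one flat spot is tight. -/
theorem statement5 (ht : ℝ → ℝ) (hsm : IsSemiMonotoneLift ht)
    (h : Circle1 → Circle1) (hlift : ∀ x, h (mk1 x) = mk1 (ht x))
    (l : ℕ) (a b : Fin l → ℝ)
    (hfs : ∀ i, IsFlatSpot ht (a i) (b i))
    (hrep : ∀ i, a i ∈ Set.Ico (0 : ℝ) 1)
    (hdist : Function.Injective a)
    (hall : ∀ a' b' : ℝ, IsFlatSpot ht a' b' → ∃ i, ∃ n : ℤ, a' = a i + n ∧ b' = b i + n)
    (D : ℝ → ℝ) (hDcont : ContinuousOn D (flatComplR a b))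
    (hD : ∀ x ∈ flatComplR a b, 1 < D x ∧ HasDerivWithinAt ht (D x) (flatComplR a b) x)
    (α : ℝ) (hirr : Irrational α) (hrot : HasRotNum ht α)
    (Z : Set Circle1) (hZ : IsMinimalSet h Z) (hZu : ∀ Z', IsMinimalSet h Z' → Z' = Z) :
    (∀ i : Fin l,
      (¬(mk1 (a i) ∈ Z ∧ mk1 (b i) ∈ Z)) ↔
        ∃ n, 0 < n ∧ ∃ i' : Fin l,
          ∀ x ∈ Set.Icc (a i) (b i), h^[n] (mk1 x) ∈ mk1 '' Set.Icc (a i') (b i')) ∧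
    ∃ i : Fin l, mk1 (a i) ∈ Z ∧ mk1 (b i) ∈ Z := by
  rcases Nat.eq_zero_or_pos l with hl | hl
  · -- no flat spots: expansion everywhere contradicts the degree-one property
    exfalso
    subst hl
    have huniv : flatComplR a b = Set.univ := by
      ext x
      constructor
      · intro _; trivial
      · intro _ i; exact i.elim0
    have hder : ∀ x : ℝ, HasDerivAt ht (D x) x := by
      intro x
      have hx : x ∈ flatComplR a b := by rw [huniv]; trivial
      have := (hD x hx).2
      rw [huniv, hasDerivWithinAt_univ] at this
      exact this
    obtain ⟨c, hcI, hceq⟩ := exists_hasDerivAt_eq_slope ht D (by norm_num : (0:ℝ) < 1)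
      (hsm.1.continuousOn) (fun x _ => hder x)
    have h1 : ht 1 = ht 0 + 1 := by
      have := hsm.2.2 0
      simpa using this
    have h2 : D c = 1 := by rw [hceq, h1]; ring
    have h3 : 1 < D c := by
      have hc : c ∈ flatComplR a b := by rw [huniv]; trivial
      exact (hD c hc).1
    linarith
  · have hiff : ∀ i : Fin l, (¬(mk1 (a i) ∈ Z ∧ mk1 (b i) ∈ Z)) ↔ ∃ n, 0 < n ∧ ∃ i' : Fin l,
        ∀ x ∈ Set.Icc (a i) (b i), h^[n] (mk1 x) ∈ mk1 '' Set.Icc (a i') (b i') := by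
      intro i
      constructor
      · intro hloose
        exact S5.partB hsm hlift hirr hrot hZ hall hfs hD hloose
      · rintro ⟨n, hn, i', himg⟩ ⟨haZ, hbZ⟩
        exact S5.partA hsm hlift hirr hrot hZ hall (hfs i) (hfs i') haZ hbZ hn himg
    refine ⟨hiff, ?_⟩
    by_contra hnone
    push_neg at hnone
    have hstep : ∀ i : Fin l, ∃ (n : ℕ) (i' : Fin l), 0 < n ∧
        ∀ x ∈ Set.Icc (a i) (b i), h^[n] (mk1 x) ∈ mk1 '' Set.Icc (a i') (b i') := by
      intro i
      obtain ⟨n, hn, i', himg⟩ := (hiff i).mp (fun hand => (hnone i hand.1 hand.2).elim)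
      exact ⟨n, i', hn, himg⟩
    choose nf σ hpos himgs using hstep
    -- chains of flat spots
    have hkey : ∀ (j : Fin l) (r : ℕ), ∃ Nr : ℕ, r ≤ Nr ∧
        ∀ x ∈ Set.Icc (a j) (b j),
          h^[Nr] (mk1 x) ∈ mk1 '' Set.Icc (a (σ^[r] j)) (b (σ^[r] j)) := by
      intro j r
      induction r with
      | zero => exact ⟨0, le_refl 0, fun x hx => ⟨x, hx, rfl⟩⟩
      | succ r ih =>
        obtain ⟨Nr, hNr, hcl⟩ := ih
        refine ⟨nf (σ^[r] j) + Nr, by have := hpos (σ^[r] j); omega, ?_⟩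
        intro x hx
        obtain ⟨y, hy, hye⟩ := hcl x hx
        rw [Function.iterate_add_apply h (nf (σ^[r] j)) Nr (mk1 x), ← hye,
          Function.iterate_succ_apply' σ r j]
        exact himgs (σ^[r] j) y hy
    -- pigeonhole: a cycle among the flat spots
    set i0 : Fin l := ⟨0, hl⟩ with hi0
    obtain ⟨p, q, hpq, hgeq⟩ :=
      Finite.exists_ne_map_eq_of_infinite (fun r : ℕ => σ^[r] i0)
    obtain ⟨p', q', hplt, hgeq'⟩ : ∃ p' q', p' < q' ∧ σ^[p'] i0 = σ^[q'] i0 := by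
      rcases lt_or_gt_of_ne hpq with h1 | h1
      · exact ⟨p, q, h1, hgeq⟩
      · exact ⟨q, p, h1, hgeq.symm⟩
    set istar := σ^[p'] i0 with histar
    have hcycle : σ^[q' - p'] istar = istar := by
      rw [histar, ← Function.iterate_add_apply]
      have e : q' - p' + p' = q' := by omega
      rw [e, ← hgeq']
    obtain ⟨N, hNge, hmap⟩ := hkey istar (q' - p')
    rw [hcycle] at hmap
    have hN1 : 1 ≤ N := le_trans (by omega) hNge
    -- a periodic-like orbit of the collapsed flat spot: rational rotation number
    have habs : a istar < b istar := (hfs istar).1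
    have hmem := hmap (a istar) ⟨le_refl _, le_of_lt habs⟩
    rw [S5.iter_lift hlift] at hmem
    obtain ⟨w, hwI, hwe⟩ := hmem
    obtain ⟨t, hte⟩ := S5.mk1_eq_iff.mp hwe
    -- hte : w = ht^[N] (a istar) + t
    have hcoll : ∀ y ∈ Set.Icc (a istar) (b istar), ht^[N] y = ht^[N] (a istar) :=
      fun y hy => S5.iter_flat_collapse hsm hy (hfs istar).2.2.1 hN1
    have hkiter : ∀ k : ℕ, ht^[(k+1)*N] (a istar) = w - ((k:ℝ)+1)*t := by
      intro k
      induction k with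
      | zero =>
        simp only [Nat.zero_add, one_mul, Nat.cast_zero]
        linarith [hte]
      | succ k ih =>
        have e1 : (k+2)*N = N + (k+1)*N := by ring
        rw [show k+1+1 = k+2 from rfl, e1, Function.iterate_add_apply, ih]
        have e2 : w - ((k:ℝ)+1)*t = w + ((-(k+1)*t : ℤ) : ℝ) := by push_cast; ring
        rw [e2, S5.iter_add_int hsm N w (-(k+1)*t), hcoll w hwI]
        push_cast
        linarith [hte]
    refine S5.rot_rat_contra hirr hrot (x := a istar) (j := -t) (C := |w - a istar|) hN1 ?_
    intro k hk
    obtain ⟨k', rfl⟩ : ∃ k', k = k' + 1 := ⟨k - 1, by omega⟩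
    rw [hkiter k']
    have e3 : w - ((k':ℝ)+1)*t - a istar - ((k'+1 : ℕ):ℝ)*((-t : ℤ):ℝ) = w - a istar := by
      push_cast
      ring
    rw [e3]
end
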